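/- arXiv:2004.01327 — 7 statements merged into one kernel-verified Lean document; each statement's English description precedes it below -/
import Mathlib

section
/- The odd graph O_n admits an induced subgraph of maximum degree at most 1 on a set of strictly more than half of its vertices. -/
/-- The odd graph `O_n`: vertices are the `n`-subsets of `Ω` (where `|Ω| = 2n+1`),
two vertices being adjacent iff the corresponding subsets are disjoint. -/
def oddGraph (n : ℕ) (Ω : Type*) : SimpleGraph {A : Finset Ω // A.card = n} :=
  SimpleGraph.fromRel (fun A B => Disjoint A.1 B.1)

/-- The odd graph `O_n` admits an induced subgraph of maximum degree at most `1`
on a set of strictly more than half of its vertices. -/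
theorem oddGraph_induced_matching_on_more_than_half (n : ℕ) (hn : 1 ≤ n)
    (Ω : Type*) [Fintype Ω] (hΩ : Fintype.card Ω = 2 * n + 1) :
    ∃ U : Set {A : Finset Ω // A.card = n},
      2 * U.ncard > Nat.card {A : Finset Ω // A.card = n} ∧
      ∀ A ∈ U, ({B ∈ U | (oddGraph n Ω).Adj A B}).ncard ≤ 1 := by
  classical
  -- pick a point x
  have hpos : 0 < Fintype.card Ω := by omega
  obtain ⟨x⟩ := Fintype.card_pos_iff.mp hpos
  set W : Finset Ω := Finset.univ.erase x with hW
  have hWcard : W.card = 2 * n := by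
    simp [hW, Finset.card_erase_of_mem, Finset.card_univ, hΩ]
  refine ⟨{A | x ∉ A.1}, ?_, ?_⟩
  · -- counting
    have hU : ({A : {A : Finset Ω // A.card = n} | x ∉ A.1}).ncard
        = (2 * n).choose n := by
      rw [Set.ncard_eq_toFinset_card']
      rw [← hWcard, ← Finset.card_powersetCard]
      apply Finset.card_bij (fun A _ => A.1)
      · intro A hA
        simp only [Set.mem_toFinset, Set.mem_setOf_eq] at hA
        simp [Finset.mem_powersetCard, Finset.subset_erase, A.2, hW, hA]
      · intro A _ B _ h
        exact Subtype.ext h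
      · intro s hs
        simp only [Finset.mem_powersetCard] at hs
        exact ⟨⟨s, hs.2⟩, by simpa [hW, Finset.subset_erase] using hs.1, rfl⟩
    rw [hU, Nat.card_eq_fintype_card, Fintype.card_finset_len, hΩ]
    have h1 : (2 * n + 1).choose n = (2 * n).choose (n - 1) + (2 * n).choose n := by
      obtain ⟨m, rfl⟩ : ∃ m, n = m + 1 := ⟨n - 1, by omega⟩
      rw [Nat.choose_succ_succ']
      simp
    have h2 : (2 * n).choose ((n - 1) + 1) * ((n - 1) + 1)
        = (2 * n).choose (n - 1) * (2 * n - (n - 1)) := Nat.choose_succ_right_eq _ _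
    rw [show (n - 1) + 1 = n by omega, show 2 * n - (n - 1) = n + 1 by omega] at h2
    have h3 : 0 < (2 * n).choose n := Nat.choose_pos (by omega)
    rw [h1]
    nlinarith
  · -- max degree 1
    intro A hA
    simp only [Set.mem_setOf_eq] at hA
    have hAsub : A.1 ⊆ W := by
      simp [hW, Finset.subset_erase, hA]
    have key : ∀ B : {A : Finset Ω // A.card = n},
        B ∈ {B ∈ {A : {A : Finset Ω // A.card = n} | x ∉ A.1} | (oddGraph n Ω).Adj A B}
        → B.1 = W \ A.1 := by
      intro B hB
      obtain ⟨hBx, hadj⟩ := hB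
      simp only [Set.mem_setOf_eq] at hBx
      have hBsub : B.1 ⊆ W := by
        simp [hW, Finset.subset_erase, hBx]
      rw [oddGraph, SimpleGraph.fromRel_adj] at hadj
      have hdisj : Disjoint A.1 B.1 := by
        rcases hadj.2 with h | h
        · exact h
        · exact h.symm
      apply Finset.eq_of_subset_of_card_le
      · intro a ha
        simp only [Finset.mem_sdiff]
        exact ⟨hBsub ha, fun haA => (Finset.disjoint_left.mp hdisj haA) ha⟩
      · rw [Finset.card_sdiff_of_subset hAsub, hWcard, A.2, B.2]
        omega
    have hsub : {B ∈ {A : {A : Finset Ω // A.card = n} | x ∉ A.1} | (oddGraph n Ω).Adj A B}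
        ⊆ {C : {A : Finset Ω // A.card = n} | C.1 = W \ A.1} := fun B hB => key B hB
    calc ({B ∈ {A : {A : Finset Ω // A.card = n} | x ∉ A.1} | (oddGraph n Ω).Adj A B}).ncard
        ≤ ({C : {A : Finset Ω // A.card = n} | C.1 = W \ A.1}).ncard :=
          Set.ncard_le_ncard hsub (Set.toFinite _)
      _ ≤ 1 := by
          rw [Set.ncard_le_one_iff (Set.toFinite _)]
          intro B C hB hC
          exact Subtype.ext (hB.trans hC.symm)
end

section
/- If Γ is a d-regular graph (d ≥ 1) on n vertices and X is a subset of vertices such that the induced subgraph on X has maximum degree at most 1, then |X|/n ≤ d/(2d−1), equivalently (2d−1)|X| ≤ d·n. -/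
/-- If `Γ` is a `d`-regular graph (`d ≥ 1`) on `n` vertices and `X` is a set of vertices
such that the induced subgraph on `X` has maximum degree at most `1`, then
`|X|/n ≤ d/(2d-1)`, equivalently `(2d-1)|X| ≤ d·n`. -/
theorem regular_induced_matching_bound {V : Type*} [Fintype V]
    (Γ : SimpleGraph V) (d : ℕ) (hd : 1 ≤ d)
    (hreg : ∀ v : V, Nat.card (Γ.neighborSet v) = d)
    (X : Set V) (hX : ∀ v ∈ X, ({w ∈ X | Γ.Adj v w}).ncard ≤ 1) :
    (2 * d - 1) * X.ncard ≤ d * Fintype.card V := by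
  classical
  set s : Finset V := X.toFinset with hs
  have hscard : X.ncard = s.card := by
    rw [hs, Set.ncard_eq_toFinset_card']
  -- degree in Finset form
  have hdeg : ∀ v : V, Γ.degree v = d := by
    intro v
    rw [← hreg v, Nat.card_eq_fintype_card, SimpleGraph.card_neighborSet_eq_degree]
  -- at most one neighbour inside s
  have hin : ∀ v ∈ s, (s.filter (Γ.Adj v)).card ≤ 1 := by
    intro v hv
    have hv' : v ∈ X := by simpa [hs] using hv
    have := hX v hv'
    rw [Set.ncard_eq_toFinset_card'] at this
    convert this using 2
    ext w; simp [hs, and_comm]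
  -- lower bound: neighbours outside s
  have hout : ∀ v ∈ s, d - 1 ≤ (sᶜ.filter (Γ.Adj v)).card := by
    intro v hv
    have hsplit : (s.filter (Γ.Adj v)).card + (sᶜ.filter (Γ.Adj v)).card = d := by
      rw [← hdeg v, ← SimpleGraph.card_neighborFinset_eq_degree]
      rw [← Finset.card_union_of_disjoint]
      · congr 1
        ext w
        simp [SimpleGraph.mem_neighborFinset]
        tauto
      · exact Finset.disjoint_filter_filter disjoint_compl_right
    have := hin v hv
    omega
  have hout' : ∀ v ∈ s, d - 1 ≤ (sᶜ.filter (Γ.Adj v)).card := hout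
  -- double counting
  have hswap : ∑ v ∈ s, (sᶜ.filter (Γ.Adj v)).card
      = ∑ w ∈ sᶜ, (s.filter (Γ.Adj w)).card := by
    simp only [Finset.card_filter]
    rw [Finset.sum_comm]
    congr 1
    ext v
    congr 1
    ext w
    simp [Γ.adj_comm]
  have h1 : (d - 1) * s.card ≤ ∑ v ∈ s, (sᶜ.filter (Γ.Adj v)).card := by
    calc (d - 1) * s.card = ∑ _v ∈ s, (d - 1) := by
          rw [Finset.sum_const, smul_eq_mul, mul_comm]
      _ ≤ _ := Finset.sum_le_sum hout
  have h2 : ∑ w ∈ sᶜ, (s.filter (Γ.Adj w)).card ≤ d * sᶜ.card := by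
    calc ∑ w ∈ sᶜ, (s.filter (Γ.Adj w)).card
        ≤ ∑ w ∈ sᶜ, d := by
          refine Finset.sum_le_sum fun w _ => ?_
          rw [← hdeg w, ← SimpleGraph.card_neighborFinset_eq_degree]
          apply Finset.card_le_card
          intro x hx
          simp only [Finset.mem_filter] at hx
          simp [SimpleGraph.mem_neighborFinset, hx.2]
      _ = d * sᶜ.card := by rw [Finset.sum_const, smul_eq_mul, mul_comm]
  have hkey : (d - 1) * s.card ≤ d * sᶜ.card := le_trans h1 (hswap ▸ h2)
  have hcc : sᶜ.card = Fintype.card V - s.card := Finset.card_compl s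
  have hle : s.card ≤ Fintype.card V := Finset.card_le_univ s
  have e1 : d * (Fintype.card V - s.card) = d * Fintype.card V - d * s.card :=
    Nat.mul_sub d _ _
  have e2 : (d - 1) * s.card = d * s.card - s.card := by rw [Nat.sub_mul, one_mul]
  have e3 : s.card ≤ d * s.card := Nat.le_mul_of_pos_left _ hd
  have e4 : d * s.card ≤ d * Fintype.card V := Nat.mul_le_mul_left d hle
  have e5 : (2 * d - 1) * s.card = 2 * (d * s.card) - s.card := by
    rw [Nat.sub_mul, one_mul, mul_assoc]
  rw [hscard, e5]
  rw [hcc, e1, e2] at hkey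
  set A := d * s.card
  set B := d * Fintype.card V
  omega
end

section
/- For every m ≥ 1, the Cayley graph Cay(D_{18m}, {b, ab, a³b}) on the dihedral group of order 18m admits an induced subgraph of maximum degree at most 1 on a set of 10m vertices, which is more than half of 18m. -/
/-- The Cayley graph of a group `G` with connection set `S`. -/
def cayley (G : Type*) [Group G] (S : Set G) : SimpleGraph G :=
  SimpleGraph.fromRel (fun g h => g⁻¹ * h ∈ S)

namespace Dih18mAux

open DihedralGroup

def A9 : Finset (ZMod 9) := {0, 1, 3, 4, 7}

set_option synthInstance.maxSize 512 in
lemma key : ∀ c d₁ d₂ : ZMod 9, c ∈ A9 → d₁ ∈ A9 → d₂ ∈ A9 →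
    (c + d₁ = 0 ∨ c + d₁ = -1 ∨ c + d₁ = -3) →
    (c + d₂ = 0 ∨ c + d₂ = -1 ∨ c + d₂ = -3) → d₁ = d₂ := by decide

variable {n : ℕ}

lemma inv_r (i : ZMod n) : (r i)⁻¹ = r (-i) := rfl
lemma inv_sr (i : ZMod n) : (sr i)⁻¹ = sr i := rfl

def Sn (n : ℕ) : Set (DihedralGroup n) := {sr 0, sr (-1), sr (-3)}

lemma adj_rr (i j : ZMod n) : ¬ (cayley _ (Sn n)).Adj (r i) (r j) := by
  simp [cayley, Sn, SimpleGraph.fromRel_adj, inv_r]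

lemma adj_srsr (i j : ZMod n) : ¬ (cayley _ (Sn n)).Adj (sr i) (sr j) := by
  simp [cayley, Sn, SimpleGraph.fromRel_adj, inv_sr]

lemma adj_rsr (i j : ZMod n) :
    (cayley _ (Sn n)).Adj (r i) (sr j) ↔ (i + j = 0 ∨ i + j = -1 ∨ i + j = -3) := by
  simp [cayley, Sn, SimpleGraph.fromRel_adj, inv_r, inv_sr, sub_neg_eq_add, add_comm j i]

lemma adj_srr (i j : ZMod n) :
    (cayley _ (Sn n)).Adj (sr i) (r j) ↔ (i + j = 0 ∨ i + j = -1 ∨ i + j = -3) := by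
  simp [cayley, Sn, SimpleGraph.fromRel_adj, inv_r, inv_sr, sub_neg_eq_add, add_comm j i]

lemma fiber_card (m : ℕ) [NeZero (9 * m)] (a : ZMod 9) :
    (Finset.univ.filter fun i : ZMod (9 * m) => ((i.val : ℕ) : ZMod 9) = a).card = m := by
  have h9m : 0 < 9 * m := Nat.pos_of_ne_zero (NeZero.ne _)
  have hav : a.val < 9 := a.val_lt
  apply Finset.card_eq_of_bijective (f := fun k _ => ((a.val + 9 * k : ℕ) : ZMod (9 * m)))
  · intro i hi
    simp only [Finset.mem_filter, Finset.mem_univ, true_and] at hi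
    have hiv : i.val < 9 * m := i.val_lt
    have hmod : a.val = i.val % 9 := by
      have := congrArg ZMod.val hi
      rwa [ZMod.val_natCast, eq_comm] at this
    refine ⟨i.val / 9, by omega, ?_⟩
    have : a.val + 9 * (i.val / 9) = i.val := by omega
    rw [this, ZMod.natCast_rightInverse i]
  · intro k hk
    simp only [Finset.mem_filter, Finset.mem_univ, true_and]
    have hlt : a.val + 9 * k < 9 * m := by omega
    have hv : (((a.val + 9 * k : ℕ) : ZMod (9 * m))).val = a.val + 9 * k :=
      ZMod.val_cast_of_lt hlt
    rw [hv]
    push_cast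
    have h9 : (9 : ZMod 9) = 0 := by decide
    simp [h9, ZMod.natCast_val, ZMod.cast_id]
  · intro k k' hk hk' he
    have h1 := congrArg ZMod.val he
    rw [ZMod.val_cast_of_lt (by omega), ZMod.val_cast_of_lt (by omega)] at h1
    omega

lemma countA (m : ℕ) [NeZero (9 * m)] :
    (Finset.univ.filter fun i : ZMod (9 * m) => ((i.val : ℕ) : ZMod 9) ∈ A9).card = 5 * m := by
  rw [Finset.card_eq_sum_card_fiberwise
    (f := fun i : ZMod (9 * m) => ((i.val : ℕ) : ZMod 9)) (t := A9)
    (s := Finset.univ.filter fun i : ZMod (9 * m) => ((i.val : ℕ) : ZMod 9) ∈ A9)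
    (fun x hx => (Finset.mem_filter.mp hx).2)]
  have h : ∀ a ∈ A9,
      ((Finset.univ.filter fun i : ZMod (9 * m) => ((i.val : ℕ) : ZMod 9) ∈ A9).filter
        fun i => ((i.val : ℕ) : ZMod 9) = a).card = m := by
    intro a ha
    rw [Finset.filter_filter]
    have : (Finset.univ.filter fun i : ZMod (9 * m) =>
        (((i.val : ℕ) : ZMod 9) ∈ A9 ∧ ((i.val : ℕ) : ZMod 9) = a))
        = Finset.univ.filter fun i : ZMod (9 * m) => ((i.val : ℕ) : ZMod 9) = a := by
      apply Finset.filter_congr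
      intro x _
      constructor
      · exact fun h => h.2
      · exact fun h => ⟨h ▸ ha, h⟩
    rw [this, fiber_card]
  rw [Finset.sum_congr rfl h, Finset.sum_const]
  have : A9.card = 5 := by decide
  simp [this, mul_comm]

end Dih18mAux

open DihedralGroup Dih18mAux in
/-- For every `m ≥ 1`, the Cayley graph `Cay(D_{18m}, {b, ab, a³b})` on the dihedral
group of order `18m` admits an induced subgraph of maximum degree at most 1 on a set of
`10m` vertices, which is more than half of `18m`. -/
theorem dihedral18m_induced_matching (m : ℕ) (hm : 1 ≤ m) :
    let a : DihedralGroup (9 * m) := DihedralGroup.r 1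
    let b : DihedralGroup (9 * m) := DihedralGroup.sr 0
    let S : Set (DihedralGroup (9 * m)) := {b, a * b, a ^ 3 * b}
    ∃ U : Set (DihedralGroup (9 * m)),
      U.ncard = 10 * m ∧ 2 * U.ncard > Nat.card (DihedralGroup (9 * m)) ∧
      ∀ g ∈ U, ({h ∈ U | (cayley (DihedralGroup (9 * m)) S).Adj g h}).ncard ≤ 1 := by
  intro a b S
  haveI : NeZero (9 * m) := ⟨by omega⟩
  have hS : S = Sn (9 * m) := by
    have h3 : a ^ 3 * b = sr (-3) := by
      show (r 1 : DihedralGroup (9 * m)) ^ 3 * sr 0 = sr (-3)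
      rw [r_one_pow, r_mul_sr]
      norm_num
    have h1 : a * b = sr (-1) := by
      show (r 1 : DihedralGroup (9 * m)) * sr 0 = sr (-1)
      rw [r_mul_sr]
      norm_num
    simp only [S, Sn, h1, h3, b]
  -- the projection mod 9
  set φ : ZMod (9 * m) →+* ZMod 9 := ZMod.castHom ⟨m, rfl⟩ (ZMod 9) with hφdef
  have hφ : ∀ i : ZMod (9 * m), φ i = ((i.val : ℕ) : ZMod 9) := by
    intro i
    rw [hφdef, ZMod.castHom_apply, ← ZMod.natCast_val]
  -- distinctness of targets under φ
  have hφT : ∀ x y : ZMod (9 * m),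
      (x = 0 ∨ x = -1 ∨ x = -3) → (y = 0 ∨ y = -1 ∨ y = -3) → φ x = φ y → x = y := by
    intro x y hx hy hxy
    have e0 : φ (0 : ZMod (9 * m)) = 0 := map_zero φ
    have e1 : φ (-1 : ZMod (9 * m)) = -1 := by rw [map_neg, map_one]
    have e3 : φ (-3 : ZMod (9 * m)) = -3 := by rw [map_neg, map_ofNat]
    rcases hx with rfl | rfl | rfl <;> rcases hy with rfl | rfl | rfl <;>
      simp only [e0, e1, e3] at hxy <;>
      first | rfl | exact absurd hxy (by decide)
  have mapT : ∀ x : ZMod (9 * m), (x = 0 ∨ x = -1 ∨ x = -3) →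
      (φ x = 0 ∨ φ x = -1 ∨ φ x = -3) := by
    intro x hx
    have e0 : φ (0 : ZMod (9 * m)) = 0 := map_zero φ
    have e1 : φ (-1 : ZMod (9 * m)) = -1 := by rw [map_neg, map_one]
    have e3 : φ (-3 : ZMod (9 * m)) = -3 := by rw [map_neg, map_ofNat]
    rcases hx with rfl | rfl | rfl
    · exact Or.inl e0
    · exact Or.inr (Or.inl e1)
    · exact Or.inr (Or.inr e3)
  classical
  set U : Set (DihedralGroup (9 * m)) :=
    (r '' {i | φ i ∈ A9}) ∪ (sr '' {i | φ i ∈ A9}) with hUdef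
  have hrinj : Function.Injective (r : ZMod (9 * m) → DihedralGroup (9 * m)) :=
    fun x y h => by injection h
  have hsrinj : Function.Injective (sr : ZMod (9 * m) → DihedralGroup (9 * m)) :=
    fun x y h => by injection h
  have hdisj : Disjoint (r '' {i | φ i ∈ A9}) (sr '' {i | φ i ∈ A9}) := by
    rw [Set.disjoint_left]
    rintro x ⟨i, -, rfl⟩ ⟨j, -, hj⟩
    exact absurd hj (by simp)
  have hcount : {i : ZMod (9 * m) | φ i ∈ A9}.ncard = 5 * m := by
    rw [Set.ncard_eq_toFinset_card']
    simp only [Set.toFinset_setOf]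
    rw [Finset.filter_congr (fun x _ => by rw [hφ x] :
      ∀ x ∈ (Finset.univ : Finset (ZMod (9 * m))),
        (φ x ∈ A9) ↔ (((x.val : ℕ) : ZMod 9) ∈ A9))]
    exact countA m
  have hU : U.ncard = 10 * m := by
    rw [hUdef, Set.ncard_union_eq hdisj (Set.toFinite _) (Set.toFinite _),
      Set.ncard_image_of_injective _ hrinj, Set.ncard_image_of_injective _ hsrinj, hcount]
    omega
  refine ⟨U, hU, ?_, ?_⟩
  · rw [hU, Nat.card_eq_fintype_card, DihedralGroup.card]
    omega
  · intro g hg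
    have hsub : ({h ∈ U | (cayley (DihedralGroup (9 * m)) S).Adj g h}).Subsingleton := by
      rintro h1 ⟨h1U, h1adj⟩ h2 ⟨h2U, h2adj⟩
      rw [hS] at h1adj h2adj
      rcases hg with ⟨i, hi, rfl⟩ | ⟨i, hi, rfl⟩
      · -- g = r i
        rcases h1U with ⟨j1, hj1, rfl⟩ | ⟨j1, hj1, rfl⟩
        · exact absurd h1adj (adj_rr i j1)
        rcases h2U with ⟨j2, hj2, rfl⟩ | ⟨j2, hj2, rfl⟩
        · exact absurd h2adj (adj_rr i j2)
        rw [adj_rsr] at h1adj h2adj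
        have c1 : φ (i + j1) = 0 ∨ φ (i + j1) = -1 ∨ φ (i + j1) = -3 := mapT _ h1adj
        have c2 : φ (i + j2) = 0 ∨ φ (i + j2) = -1 ∨ φ (i + j2) = -3 := mapT _ h2adj
        rw [map_add] at c1 c2
        have hjj : φ j1 = φ j2 := key (φ i) (φ j1) (φ j2) hi hj1 hj2 c1 c2
        have : i + j1 = i + j2 :=
          hφT _ _ h1adj h2adj (by rw [map_add, map_add, hjj])
        rw [add_left_cancel this]
      · -- g = sr i
        rcases h1U with ⟨j1, hj1, rfl⟩ | ⟨j1, hj1, rfl⟩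
        swap
        · exact absurd h1adj (adj_srsr i j1)
        rcases h2U with ⟨j2, hj2, rfl⟩ | ⟨j2, hj2, rfl⟩
        swap
        · exact absurd h2adj (adj_srsr i j2)
        rw [adj_srr] at h1adj h2adj
        have c1 : φ (i + j1) = 0 ∨ φ (i + j1) = -1 ∨ φ (i + j1) = -3 := mapT _ h1adj
        have c2 : φ (i + j2) = 0 ∨ φ (i + j2) = -1 ∨ φ (i + j2) = -3 := mapT _ h2adj
        rw [map_add] at c1 c2
        have hjj : φ j1 = φ j2 := key (φ i) (φ j1) (φ j2) hi hj1 hj2 c1 c2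
        have : i + j1 = i + j2 :=
          hφT _ _ h1adj h2adj (by rw [map_add, map_add, hjj])
        rw [add_left_cancel this]
    rcases hsub.eq_empty_or_singleton with h | ⟨x, h⟩ <;> simp [h]
end

section
/- There exist infinitely many finite groups G with inverse-closed identity-free generating sets S such that Cay(G,S) is 3-regular and admits an induced subgraph of maximum degree at most 1 on strictly more than half its vertices. -/
/-- `S` is an inverse-closed, identity-free generating set of `G` of size `d`, and the
Cayley graph `Cay(G, S)` admits an induced subgraph of maximum degree at most 1 on
strictly more than half of its vertices. -/
def GoodCayley (G : Type*) [Group G] (S : Set G) (d : ℕ) : Prop :=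
  (∀ s ∈ S, s⁻¹ ∈ S) ∧ (1 : G) ∉ S ∧ Subgroup.closure S = ⊤ ∧ S.ncard = d ∧
    ∃ U : Set G, 2 * U.ncard > Nat.card G ∧
      ∀ g ∈ U, ({h ∈ U | (cayley G S).Adj g h}).ncard ≤ 1

namespace CubicAux

open DihedralGroup

/-- The periodic residue pattern (period 9). -/
def pA (k : ℕ) : Prop := k % 9 = 0 ∨ k % 9 = 2 ∨ k % 9 = 5 ∨ k % 9 = 6 ∨ k % 9 = 8

instance : DecidablePred pA := fun k =>
  inferInstanceAs (Decidable (k % 9 = 0 ∨ k % 9 = 2 ∨ k % 9 = 5 ∨ k % 9 = 6 ∨ k % 9 = 8))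

lemma inv_r {n : ℕ} (i : ZMod n) : (r i : DihedralGroup n)⁻¹ = r (-i) := rfl

lemma inv_sr {n : ℕ} (i : ZMod n) : (sr i : DihedralGroup n)⁻¹ = sr i := rfl

lemma count_range (m : ℕ) :
    ((Finset.range (9 * m)).filter pA).card = 5 * m := by
  induction m with
  | zero => simp
  | succ m ih =>
    have h9 : 9 * (m + 1) = 9 * m + 9 := by ring
    rw [h9, Finset.range_add, Finset.filter_union, Finset.card_union_of_disjoint, ih]
    · have h1 : ((Finset.range 9).map (addLeftEmbedding (9 * m))).filter pA
          = ((Finset.range 9).filter fun k => pA (9 * m + k)).map (addLeftEmbedding (9 * m)) := by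
        rw [Finset.filter_map]
        rfl
      have h2 : ((Finset.range 9).filter fun k => pA (9 * m + k))
          = (Finset.range 9).filter pA := by
        apply Finset.filter_congr
        intro k _
        unfold pA
        constructor <;> intro h <;> omega
      rw [h1, Finset.card_map, h2]
      have : ((Finset.range 9).filter pA).card = 5 := by decide
      omega
    · rw [Finset.disjoint_left]
      intro a ha hb
      simp only [Finset.mem_filter, Finset.mem_range] at ha
      simp only [Finset.mem_filter, Finset.mem_map, Finset.mem_range,
        addLeftEmbedding_apply] at hb
      obtain ⟨⟨k, _, hk⟩, _⟩ := hb
      omega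

lemma count_zmod (n m : ℕ) [NeZero n] (hn : n = 9 * m) :
    {i : ZMod n | pA i.val}.ncard = 5 * m := by
  subst hn
  have h1 : ZMod.val '' {i : ZMod (9 * m) | pA i.val}
      = ↑((Finset.range (9 * m)).filter pA) := by
    ext k
    simp only [Set.mem_image, Set.mem_setOf_eq, Finset.coe_filter, Finset.mem_range]
    constructor
    · rintro ⟨i, hi, rfl⟩
      exact ⟨i.val_lt, hi⟩
    · rintro ⟨hk, hpk⟩
      refine ⟨(k : ZMod (9 * m)), ?_, ?_⟩ <;> rw [ZMod.val_natCast_of_lt hk]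
      exact hpk
  have h2 := Set.ncard_image_of_injective {i : ZMod (9 * m) | pA i.val}
    (ZMod.val_injective (9 * m))
  rw [h1, Set.ncard_coe_finset, count_range] at h2
  exact h2.symm

lemma val_sub (n : ℕ) [NeZero n] (hn : 9 ∣ n) (c : ℕ) (hc : c < n) (i : ZMod n) :
    ((c : ZMod n) - i).val % 9 = (c + (9 - i.val % 9)) % 9 := by
  have hiv : i.val < n := i.val_lt
  have h2 : ((i.val : ℕ) : ZMod n) = i := ZMod.natCast_rightInverse i
  have h1 : ((c + (n - i.val) : ℕ) : ZMod n) = (c : ZMod n) - i := by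
    rw [Nat.cast_add, Nat.cast_sub hiv.le, ZMod.natCast_self, h2]
    ring
  rw [← h1, ZMod.val_natCast, Nat.mod_mod_of_dvd _ hn]
  omega

lemma adj_r (n : ℕ) [NeZero n] (i : ZMod n) (x : DihedralGroup n)
    (hadj : (cayley (DihedralGroup n) {sr 0, sr 1, sr 3}).Adj (r i) x)
    (hxU : x ∈ (r '' {i : ZMod n | pA i.val}) ∪ (sr '' {i : ZMod n | pA i.val})) :
    ∃ c : ℕ, (c = 0 ∨ c = 1 ∨ c = 3) ∧ x = sr ((c : ZMod n) - i) ∧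
      pA (((c : ZMod n) - i).val) := by
  rw [cayley, SimpleGraph.fromRel_adj] at hadj
  obtain ⟨-, hrel⟩ := hadj
  cases x with
  | r i' =>
    exfalso
    rcases hrel with h | h <;> simp [inv_r, Set.mem_insert_iff] at h
  | sr j =>
    have hmem : sr (j + i) ∈ ({sr 0, sr 1, sr 3} : Set (DihedralGroup n)) := by
      rcases hrel with h | h
      · rwa [show (r i)⁻¹ * sr j = sr (j + i) from by
          rw [inv_r, r_mul_sr, sub_neg_eq_add]] at h
      · rwa [show (sr j)⁻¹ * r i = sr (j + i) from by rw [inv_sr, sr_mul_r]] at h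
    have hpj : pA j.val := by
      rcases hxU with ⟨i', _, he⟩ | ⟨j', hj', he⟩
      · exact absurd he (by simp)
      · obtain rfl : j' = j := by injection he
        exact hj'
    simp only [Set.mem_insert_iff, Set.mem_singleton_iff, sr.injEq] at hmem
    rcases hmem with h | h | h
    · have hj : j = ((0 : ℕ) : ZMod n) - i := by
        rw [Nat.cast_zero]; exact eq_sub_of_add_eq h
      exact ⟨0, by norm_num, by rw [hj], by rw [← hj]; exact hpj⟩
    · have hj : j = ((1 : ℕ) : ZMod n) - i := by
        rw [Nat.cast_one]; exact eq_sub_of_add_eq h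
      exact ⟨1, by norm_num, by rw [hj], by rw [← hj]; exact hpj⟩
    · have hj : j = ((3 : ℕ) : ZMod n) - i := by
        rw [Nat.cast_ofNat]; exact eq_sub_of_add_eq h
      exact ⟨3, by norm_num, by rw [hj], by rw [← hj]; exact hpj⟩

lemma adj_sr (n : ℕ) [NeZero n] (j : ZMod n) (x : DihedralGroup n)
    (hadj : (cayley (DihedralGroup n) {sr 0, sr 1, sr 3}).Adj (sr j) x)
    (hxU : x ∈ (r '' {i : ZMod n | pA i.val}) ∪ (sr '' {i : ZMod n | pA i.val})) :
    ∃ c : ℕ, (c = 0 ∨ c = 1 ∨ c = 3) ∧ x = r ((c : ZMod n) - j) ∧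
      pA (((c : ZMod n) - j).val) := by
  rw [cayley, SimpleGraph.fromRel_adj] at hadj
  obtain ⟨-, hrel⟩ := hadj
  cases x with
  | sr j' =>
    exfalso
    rcases hrel with h | h <;> simp [inv_sr, Set.mem_insert_iff] at h
  | r i =>
    have hmem : sr (j + i) ∈ ({sr 0, sr 1, sr 3} : Set (DihedralGroup n)) := by
      rcases hrel with h | h
      · rwa [show (sr j)⁻¹ * r i = sr (j + i) from by rw [inv_sr, sr_mul_r]] at h
      · rwa [show (r i)⁻¹ * sr j = sr (j + i) from by
          rw [inv_r, r_mul_sr, sub_neg_eq_add]] at h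
    have hpi : pA i.val := by
      rcases hxU with ⟨i', hi', he⟩ | ⟨j', _, he⟩
      · obtain rfl : i' = i := by injection he
        exact hi'
      · exact absurd he (by simp)
    simp only [Set.mem_insert_iff, Set.mem_singleton_iff, sr.injEq] at hmem
    rcases hmem with h | h | h
    · have hi : i = ((0 : ℕ) : ZMod n) - j := by
        rw [Nat.cast_zero]
        rw [add_comm] at h
        exact eq_sub_of_add_eq h
      exact ⟨0, by norm_num, by rw [hi], by rw [← hi]; exact hpi⟩
    · have hi : i = ((1 : ℕ) : ZMod n) - j := by
        rw [Nat.cast_one]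
        rw [add_comm] at h
        exact eq_sub_of_add_eq h
      exact ⟨1, by norm_num, by rw [hi], by rw [← hi]; exact hpi⟩
    · have hi : i = ((3 : ℕ) : ZMod n) - j := by
        rw [Nat.cast_ofNat]
        rw [add_comm] at h
        exact eq_sub_of_add_eq h
      exact ⟨3, by norm_num, by rw [hi], by rw [← hi]; exact hpi⟩

lemma cast_ne (n : ℕ) [NeZero n] {a b : ℕ} (ha : a < n) (hb : b < n) (h : a ≠ b) :
    (a : ZMod n) ≠ (b : ZMod n) := fun he =>
  h (by rw [← ZMod.val_natCast_of_lt ha, he, ZMod.val_natCast_of_lt hb])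

lemma main (m : ℕ) (hm : 0 < m) :
    Nat.card (DihedralGroup (9 * m)) = 18 * m ∧
      GoodCayley (DihedralGroup (9 * m)) {sr 0, sr 1, sr 3} 3 := by
  haveI : NeZero (9 * m) := ⟨by omega⟩
  set n := 9 * m with hn
  have hn9 : (9 : ℕ) ∣ n := ⟨m, rfl⟩
  have hnge : 9 ≤ n := by omega
  have hcard : Nat.card (DihedralGroup n) = 18 * m := by
    rw [Nat.card_eq_fintype_card, DihedralGroup.card]
    omega
  refine ⟨hcard, ?_, ?_, ?_, ?_, ?_⟩
  · -- inverse closed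
    rintro s hs
    rcases hs with rfl | rfl | rfl <;> rw [inv_sr] <;> simp
  · -- identity free
    intro h
    rcases h with h | h | h <;> exact absurd h (by rw [DihedralGroup.one_def]; simp only [Set.mem_singleton_iff, reduceCtorEq, not_false_eq_true])
  · -- generates
    rw [Subgroup.eq_top_iff']
    intro x
    have h0 : (sr 0 : DihedralGroup n) ∈ Subgroup.closure {sr 0, sr 1, sr 3} :=
      Subgroup.subset_closure (by simp)
    have h1 : (sr 1 : DihedralGroup n) ∈ Subgroup.closure {sr 0, sr 1, sr 3} :=
      Subgroup.subset_closure (by simp)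
    have hr1 : (r 1 : DihedralGroup n) ∈ Subgroup.closure {sr 0, sr 1, sr 3} := by
      have := mul_mem h0 h1
      rwa [sr_mul_sr, sub_zero] at this
    have hrk : ∀ k : ℕ, (r (k : ZMod n) : DihedralGroup n) ∈
        Subgroup.closure {sr 0, sr 1, sr 3} := by
      intro k
      rw [← r_one_pow]
      exact pow_mem hr1 k
    cases x with
    | r i =>
      have := hrk i.val
      rwa [ZMod.natCast_rightInverse i] at this
    | sr j =>
      have hj : (r (j.val : ZMod n) : DihedralGroup n) ∈ _ := hrk j.val
      rw [ZMod.natCast_rightInverse j] at hj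
      have := mul_mem h0 hj
      rwa [sr_mul_r, zero_add] at this
  · -- |S| = 3
    have e01 : (sr 0 : DihedralGroup n) ≠ sr 1 := by
      simp only [ne_eq, sr.injEq]
      have := cast_ne n (a := 0) (b := 1) (by omega) (by omega) (by omega)
      exact_mod_cast this
    have e03 : (sr 0 : DihedralGroup n) ≠ sr 3 := by
      simp only [ne_eq, sr.injEq]
      have := cast_ne n (a := 0) (b := 3) (by omega) (by omega) (by omega)
      exact_mod_cast this
    have e13 : (sr 1 : DihedralGroup n) ≠ sr 3 := by
      simp only [ne_eq, sr.injEq]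
      have := cast_ne n (a := 1) (b := 3) (by omega) (by omega) (by omega)
      exact_mod_cast this
    rw [Set.ncard_insert_of_notMem (by simp [e01, e03]),
      Set.ncard_insert_of_notMem (by simp [e13]), Set.ncard_singleton]
  · -- the large sparse set
    set RA : Set (ZMod n) := {i : ZMod n | pA i.val} with hRA
    refine ⟨(r '' RA) ∪ (sr '' RA), ?_, ?_⟩
    · have hdisj : Disjoint (r '' RA) (sr '' RA) := by
        rw [Set.disjoint_left]
        rintro x ⟨i, _, rfl⟩ ⟨j, _, h⟩
        exact absurd h (by simp)
      have hinjr : Function.Injective (r : ZMod n → DihedralGroup n) := fun a b h => by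
        injection h
      have hinjsr : Function.Injective (sr : ZMod n → DihedralGroup n) := fun a b h => by
        injection h
      rw [hcard, Set.ncard_union_eq hdisj, Set.ncard_image_of_injective _ hinjr,
        Set.ncard_image_of_injective _ hinjsr, count_zmod n m hn]
      omega
    · rintro g hg
      rw [Set.ncard_le_one_iff]
      intro x y hx hy
      obtain ⟨hxU, hxadj⟩ := hx
      obtain ⟨hyU, hyadj⟩ := hy
      rcases hg with ⟨i, hi, rfl⟩ | ⟨j, hj, rfl⟩
      · obtain ⟨c1, hc1, hxe, hp1⟩ := adj_r n i x hxadj hxU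
        obtain ⟨c2, hc2, hye, hp2⟩ := adj_r n i y hyadj hyU
        have hv1 := val_sub n hn9 c1 (by omega) i
        have hv2 := val_sub n hn9 c2 (by omega) i
        have hc : c1 = c2 := by
          have hia : pA i.val := hi
          unfold pA at hia hp1 hp2
          omega
        rw [hxe, hye, hc]
      · obtain ⟨c1, hc1, hxe, hp1⟩ := adj_sr n j x hxadj hxU
        obtain ⟨c2, hc2, hye, hp2⟩ := adj_sr n j y hyadj hyU
        have hv1 := val_sub n hn9 c1 (by omega) j
        have hv2 := val_sub n hn9 c2 (by omega) j
        have hc : c1 = c2 := by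
          have hja : pA j.val := hj
          unfold pA at hja hp1 hp2
          omega
        rw [hxe, hye, hc]

end CubicAux

/-- There exist infinitely many finite groups `G` with inverse-closed identity-free
generating sets `S` such that `Cay(G, S)` is 3-regular (i.e. `|S| = 3` with all the
above conditions) and admits an induced subgraph of maximum degree at most 1 on
strictly more than half its vertices. -/
theorem infinitely_many_cubic_cayley_counterexamples :
    ∀ N : ℕ, ∃ (G : Type) (instG : Group G) (_ : Finite G) (S : Set G),
      Nat.card G > N ∧ @GoodCayley G instG S 3 := by
  intro N
  haveI : NeZero (9 * (N + 1)) := ⟨by omega⟩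
  obtain ⟨hcard, hgood⟩ := CubicAux.main (N + 1) (Nat.succ_pos N)
  exact ⟨DihedralGroup (9 * (N + 1)), inferInstance, inferInstance,
    {DihedralGroup.sr 0, DihedralGroup.sr 1, DihedralGroup.sr 3},
    by rw [hcard]; omega, hgood⟩
end

section
/- Let G be a finite group with generating set S such that Cay(G,S) is bipartite and there exists H ⊆ G with |H| > |G|/2 whose induced subgraph in Cay(G,S) has maximum degree at most 1. Then the Cayley graph of Ĝ = Z₂ ≀ G with the canonical generating set Ŝ is bipartite and admits a subset Ĥ ⊆ Ĝ with |Ĥ| > |Ĝ|/2 whose induced subgraph has maximum degree at most 1. -/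
/-- The wreath product `Z₂ ≀ G`: pairs `(a, g)` with `a : G → ZMod 2` and `g ∈ G`,
with multiplication `(a, g)(b, h) = (a + b^g, g h)` where `b^g(x) = b(g⁻¹ x)`. -/
structure Wr (G : Type*) where
  a : G → ZMod 2
  g : G

namespace Wr
variable {G : Type*} [Group G]

instance : Mul (Wr G) := ⟨fun x y => ⟨x.a + fun t => y.a (x.g⁻¹ * t), x.g * y.g⟩⟩
instance : One (Wr G) := ⟨⟨0, 1⟩⟩
instance : Inv (Wr G) := ⟨fun x => ⟨fun t => x.a (x.g * t), x.g⁻¹⟩⟩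

theorem mul_def (x y : Wr G) :
    x * y = ⟨x.a + fun t => y.a (x.g⁻¹ * t), x.g * y.g⟩ := rfl
theorem one_def : (1 : Wr G) = ⟨0, 1⟩ := rfl
theorem inv_def (x : Wr G) : x⁻¹ = ⟨fun t => x.a (x.g * t), x.g⁻¹⟩ := rfl

instance : Group (Wr G) where
  mul_assoc x y z := by
    simp only [mul_def]
    congr 1
    · funext t
      simp [add_assoc, mul_inv_rev, mul_assoc]
    · exact mul_assoc _ _ _
  one_mul x := by
    cases x with
    | mk a g =>
      simp only [mul_def, one_def]
      congr 1
      · funext t; simp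
      · exact one_mul g
  mul_one x := by
    cases x with
    | mk a g =>
      simp only [mul_def, one_def]
      congr 1
      · funext t; simp
      · exact mul_one g
  inv_mul_cancel x := by
    cases x with
    | mk a g =>
      simp only [mul_def, inv_def, one_def]
      congr 1
      · funext t
        have h2 : ∀ z : ZMod 2, z + z = 0 := by decide
        simp [h2]
      · exact inv_mul_cancel g

end Wr

/-- The generator `(a₁, 1)` of the wreath product, where `a₁` is the indicator
function of `{1}`. -/
def wgen (G : Type*) [Group G] [DecidableEq G] : Wr G :=
  ⟨fun t => if t = 1 then 1 else 0, 1⟩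

/-- The canonical generating set `Ŝ = {(a₁, 1)} ∪ {(0, s) : s ∈ S}` of `Z₂ ≀ G`. -/
def wS {G : Type*} [Group G] [DecidableEq G] (S : Set G) : Set (Wr G) :=
  insert (wgen G) ((fun s => Wr.mk 0 s) '' S)

-- ===== aux definitions and lemmas =====
namespace WreathAux

lemma Wr.ext' {G : Type*} {x y : Wr G} (h1 : x.a = y.a) (h2 : x.g = y.g) : x = y := by
  cases x; cases y; simp_all

def wrEquiv (G : Type*) : Wr G ≃ (G → ZMod 2) × G where
  toFun x := (x.a, x.g)
  invFun p := ⟨p.1, p.2⟩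
  left_inv x := by cases x; rfl
  right_inv p := rfl

noncomputable instance {G : Type*} [Fintype G] [DecidableEq G] : Fintype (Wr G) :=
  Fintype.ofEquiv _ (wrEquiv G).symm

variable {G : Type*} [Group G] [DecidableEq G] {S : Set G}

lemma adj_cases {x y : Wr G}
    (h : (cayley (Wr G) (wS S)).Adj x y) :
    (y.g = x.g ∧ y.a = fun t => x.a t + if t = x.g then 1 else 0) ∨
      (y.a = x.a ∧ (cayley G S).Adj x.g y.g) := by
  rw [cayley, SimpleGraph.fromRel_adj] at h
  obtain ⟨hne, hmem⟩ := h
  have key : ∀ u v : Wr G, u⁻¹ * v ∈ wS S → u ≠ v →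
      (v.g = u.g ∧ v.a = fun t => u.a t + if t = u.g then 1 else 0) ∨
        (v.a = u.a ∧ ((u.g)⁻¹ * v.g ∈ S ∧ u.g ≠ v.g)) := by
    intro u v hm hneq
    have hprod : u⁻¹ * v = ⟨(fun t => u.a (u.g * t)) + fun t => v.a ((u.g⁻¹)⁻¹ * t),
        u.g⁻¹ * v.g⟩ := by
      rw [Wr.inv_def, Wr.mul_def]
    rcases hm with hm | hm
    · left
      rw [hprod, wgen, Wr.mk.injEq] at hm
      obtain ⟨ha, hg⟩ := hm
      have hgg : v.g = u.g := (inv_mul_eq_one.mp hg).symm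
      refine ⟨hgg, ?_⟩
      funext t
      have h2 := congrFun ha (u.g⁻¹ * t)
      simp only [Pi.add_apply, inv_inv, mul_inv_cancel_left] at h2
      have hz : ∀ p q r : ZMod 2, p + q = r → q = p + r := by decide
      by_cases ht : t = u.g
      · have hcc : u.g⁻¹ * t = 1 := by rw [ht]; simp
        rw [if_pos hcc] at h2
        rw [if_pos ht]
        exact hz _ _ _ h2
      · have hcc : ¬ (u.g⁻¹ * t = 1) := by
          intro hc
          exact ht (by rw [inv_mul_eq_one] at hc; exact hc.symm)
        rw [if_neg hcc] at h2
        rw [if_neg ht]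
        exact hz _ _ _ h2
    · right
      obtain ⟨s, hsS, hs⟩ := hm
      rw [hprod, Wr.mk.injEq] at hs
      obtain ⟨ha, hg⟩ := hs
      have haa : v.a = u.a := by
        funext t
        have h2 := congrFun ha.symm (u.g⁻¹ * t)
        simp only [Pi.add_apply, inv_inv, mul_inv_cancel_left, Pi.zero_apply] at h2
        have hz : ∀ p q : ZMod 2, p + q = 0 → q = p := by decide
        exact hz _ _ h2
      refine ⟨haa, ?_, ?_⟩
      · rw [← hg]; exact hsS
      · intro hc
        exact hneq (Wr.ext' haa.symm hc)
  rcases hmem with hm | hm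
  · rcases key x y hm hne with h | h
    · exact Or.inl h
    · exact Or.inr ⟨h.1, by
        rw [cayley, SimpleGraph.fromRel_adj]
        exact ⟨h.2.2, Or.inl h.2.1⟩⟩
  · rcases key y x hm hne.symm with h | h
    · left
      refine ⟨h.1.symm, ?_⟩
      funext t
      have h2 := congrFun h.2 t
      have hyg : y.g = x.g := h.1.symm
      rw [hyg] at h2
      have hz2 : ∀ p q r : ZMod 2, p = q + r → q = p + r := by decide
      exact hz2 _ _ _ h2
    · right
      refine ⟨h.1.symm, ?_⟩
      rw [cayley, SimpleGraph.fromRel_adj]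
      exact ⟨fun hc => h.2.2 hc.symm, Or.inr h.2.1⟩

/-- The set of lamp configurations vanishing on `H`. -/
def Dset (H : Set G) : Set (G → ZMod 2) := {a | ∀ h ∈ H, a h = 0}

/-- `a` is a "forced" configuration: it is the indicator of a matched element of `H`. -/
def forced (S H : Set G) (a : G → ZMod 2) : Prop :=
  ∃ g, (g ∈ H ∧ ∃ h ∈ H, (cayley G S).Adj g h) ∧ a g = 1 ∧ ∀ h ∈ H, h ≠ g → a h = 0

open Classical in
noncomputable def eps (S H : Set G) (c : G → ZMod 2) (a : G → ZMod 2) : ZMod 2 :=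
  if hp : forced S H a then c hp.choose + 1 else c 1

def KsetP (S H : Set G) (c : G → ZMod 2) (a : G → ZMod 2) (g : G) : Prop :=
  (a ∈ Dset H ∧ g ∈ H) ∨ (a ∉ Dset H ∧ c g = eps S H c a)

def Kset (S H : Set G) (c : G → ZMod 2) : Set (Wr G) := {x | KsetP S H c x.a x.g}

/-- Claim A: for `a ∈ D`, `g ∈ H` matched, the toggled configuration is not in `K`. -/
lemma toggle_not_K {H : Set G} {c : G → ZMod 2} {a : G → ZMod 2} {g : G}
    (haD : a ∈ Dset H) (hgH : g ∈ H) (hm : ∃ h ∈ H, (cayley G S).Adj g h) :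
    ¬ KsetP S H c (fun t => a t + if t = g then 1 else 0) g := by
  intro hK
  set b : G → ZMod 2 := fun t => a t + if t = g then 1 else 0 with hb
  have hbg : b g = 1 := by
    have := haD g hgH
    simp [hb, this]
  have hbD : b ∉ Dset H := by
    intro hc
    have := hc g hgH
    rw [hbg] at this
    exact (by decide : (1:ZMod 2) ≠ 0) this
  rcases hK with ⟨hD, _⟩ | ⟨_, hc⟩
  · exact hbD hD
  · have hf : forced S H b := by
      refine ⟨g, ⟨hgH, hm⟩, hbg, ?_⟩
      intro h hH hne
      have := haD h hH
      simp [hb, hne, this]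
    rw [eps, dif_pos hf] at hc
    have hcg : hf.choose = g := by
      by_contra hne
      have h1 := hf.choose_spec.2.1
      have h2 : b hf.choose = 0 := by
        have := haD hf.choose hf.choose_spec.1.1
        simp [hb, hne, this]
      rw [h1] at h2
      exact (by decide : (1:ZMod 2) ≠ 0) h2
    rw [hcg] at hc
    revert hc
    have : ∀ p : ZMod 2, ¬ (p = p + 1) := by decide
    exact this _

lemma K_deg {G : Type*} [Group G] [Fintype G] [DecidableEq G] {S H : Set G} {c : G → ZMod 2}
    (hcol : ∀ {g h : G}, (cayley G S).Adj g h → c g ≠ c h)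
    (hH1 : ∀ g ∈ H, ({h ∈ H | (cayley G S).Adj g h}).ncard ≤ 1) :
    ∀ x ∈ Kset S H c, ({y ∈ Kset S H c | (cayley (Wr G) (wS S)).Adj x y}).ncard ≤ 1 := by
  intro x hx
  rw [Set.ncard_le_one_iff]
  rintro y z ⟨hyK, hyA⟩ ⟨hzK, hzA⟩
  rcases hx with ⟨haD, hgH⟩ | ⟨haD, hce⟩
  · by_cases hm : ∃ h ∈ H, (cayley G S).Adj x.g h
    · have form : ∀ w : Wr G, w ∈ Kset S H c → (cayley (Wr G) (wS S)).Adj x w →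
          w.a = x.a ∧ w.g ∈ {h ∈ H | (cayley G S).Adj x.g h} := by
        intro w hwK hwA
        rcases adj_cases hwA with ⟨hg, ha⟩ | ⟨ha, hadj⟩
        · exfalso
          have hKP : KsetP S H c w.a w.g := hwK
          rw [ha, hg] at hKP
          exact toggle_not_K haD hgH hm hKP
        · have hwH : w.g ∈ H := by
            rcases hwK with ⟨_, h2⟩ | ⟨h1, _⟩
            · exact h2
            · exact absurd (by rw [ha]; exact haD) h1
          exact ⟨ha, hwH, hadj⟩
      obtain ⟨hya, hyg⟩ := form y hyK hyA
      obtain ⟨hza, hzg⟩ := form z hzK hzA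
      have hgg := (Set.ncard_le_one_iff (Set.toFinite _)).mp (hH1 x.g hgH) hyg hzg
      exact Wr.ext' (hya.trans hza.symm) hgg
    · have form : ∀ w : Wr G, w ∈ Kset S H c → (cayley (Wr G) (wS S)).Adj x w →
          w.g = x.g ∧ w.a = fun t => x.a t + if t = x.g then 1 else 0 := by
        intro w hwK hwA
        rcases adj_cases hwA with h | ⟨ha, hadj⟩
        · exact h
        · exfalso
          rcases hwK with ⟨_, h2⟩ | ⟨h1, _⟩
          · exact hm ⟨w.g, h2, hadj⟩
          · exact h1 (by rw [ha]; exact haD)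
      obtain ⟨hyg, hya⟩ := form y hyK hyA
      obtain ⟨hzg, hza⟩ := form z hzK hzA
      exact Wr.ext' (hya.trans hza.symm) (hyg.trans hzg.symm)
  · have form : ∀ w : Wr G, w ∈ Kset S H c → (cayley (Wr G) (wS S)).Adj x w →
        w.g = x.g ∧ w.a = fun t => x.a t + if t = x.g then 1 else 0 := by
      intro w hwK hwA
      rcases adj_cases hwA with h | ⟨ha, hadj⟩
      · exact h
      · exfalso
        rcases hwK with ⟨h1, _⟩ | ⟨_, h2⟩
        · exact haD (by rw [← ha]; exact h1)
        · rw [ha, ← hce] at h2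
          exact hcol hadj h2.symm
    obtain ⟨hyg, hya⟩ := form y hyK hyA
    obtain ⟨hzg, hza⟩ := form z hzK hzA
    exact Wr.ext' (hya.trans hza.symm) (hyg.trans hzg.symm)

lemma fiber_D {G : Type*} [Group G] [DecidableEq G] {S H : Set G} {c : G → ZMod 2}
    {a : G → ZMod 2} (haD : a ∈ Dset H) : {g | KsetP S H c a g} = H := by
  ext g
  constructor
  · rintro (⟨_, h⟩ | ⟨h1, _⟩)
    · exact h
    · exact absurd haD h1
  · intro hg
    exact Or.inl ⟨haD, hg⟩

lemma fiber_nD {G : Type*} [Group G] [DecidableEq G] {S H : Set G} {c : G → ZMod 2}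
    {a : G → ZMod 2} (haD : a ∉ Dset H) :
    {g | KsetP S H c a g} = {g | c g = eps S H c a} := by
  ext g
  constructor
  · rintro (⟨h1, _⟩ | ⟨_, h2⟩)
    · exact absurd h1 haD
    · exact h2
  · intro hg
    exact Or.inr ⟨haD, hg⟩

lemma K_card {G : Type*} [Group G] [Fintype G] [DecidableEq G] (S H : Set G) (c : G → ZMod 2) :
    (Kset S H c).ncard = ∑ a : G → ZMod 2, ({g | KsetP S H c a g}).ncard := by
  classical
  rw [← Nat.card_coe_set_eq]
  have e1 : ↥(Kset S H c) ≃ {p : (G → ZMod 2) × G // KsetP S H c p.1 p.2} :=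
    (wrEquiv G).subtypeEquiv (fun x => Iff.rfl)
  have e2 := Equiv.subtypeProdEquivSigmaSubtype (fun (a : G → ZMod 2) (g : G) => KsetP S H c a g)
  rw [Nat.card_congr (e1.trans e2), Nat.card_eq_fintype_card, Fintype.card_sigma]
  apply Finset.sum_congr rfl
  intro a _
  rw [← Nat.card_eq_fintype_card]
  exact Nat.card_coe_set_eq ({g | KsetP S H c a g})

lemma wreath_colorable {G : Type*} [Group G] [Fintype G] [DecidableEq G] {S : Set G}
    (c : G → ZMod 2) (hcol : ∀ {g h : G}, (cayley G S).Adj g h → c g ≠ c h) :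
    (cayley (Wr G) (wS S)).Colorable 2 := by
  have C : (cayley (Wr G) (wS S)).Coloring (ZMod 2) := by
    apply SimpleGraph.Coloring.mk (fun x => c x.g + ∑ t, x.a t)
    intro x y hadj
    rcases adj_cases hadj with ⟨hg, ha⟩ | ⟨ha, hadj'⟩
    · rw [hg, ha]
      have hsum : ∑ t, (x.a t + if t = x.g then 1 else 0) = (∑ t, x.a t) + 1 := by
        rw [Finset.sum_add_distrib]
        congr 1
        simp
      rw [hsum]
      exact (by decide : ∀ p q : ZMod 2, p + q ≠ p + (q + 1)) _ _
    · rw [ha]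
      exact (by decide : ∀ p q r : ZMod 2, p ≠ q → p + r ≠ q + r) _ _ _ (hcol hadj')
  have h2 : Fintype.card (ZMod 2) = 2 := ZMod.card 2
  exact h2 ▸ C.colorable

lemma class_le {G : Type*} [Group G] [Fintype G] [DecidableEq G] {S : Set G}
    {c : G → ZMod 2} (hcol : ∀ {g h : G}, (cayley G S).Adj g h → c g ≠ c h)
    {s₀ : G} (hs₀ : s₀ ∈ S) (hs₀ne : s₀ ≠ 1) (v : ZMod 2) :
    ({g | c g = v}).ncard ≤ ({g | c g = v + 1}).ncard := by
  apply Set.ncard_le_ncard_of_injOn (fun g => g * s₀)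
  · intro g hg
    have hAdj : (cayley G S).Adj g (g * s₀) := by
      rw [cayley, SimpleGraph.fromRel_adj]
      refine ⟨?_, Or.inl (by simpa using hs₀)⟩
      intro hc
      exact hs₀ne (left_eq_mul.mp hc)
    have hne := hcol hAdj
    have := (by decide : ∀ p q : ZMod 2, p ≠ q → q = p + 1) _ _ hne
    rw [hg] at this
    exact this
  · exact Set.injOn_of_injective (mul_left_injective s₀)

lemma class_eq {G : Type*} [Group G] [Fintype G] [DecidableEq G] {S : Set G}
    {c : G → ZMod 2} (hcol : ∀ {g h : G}, (cayley G S).Adj g h → c g ≠ c h)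
    {s₀ : G} (hs₀ : s₀ ∈ S) (hs₀ne : s₀ ≠ 1) (v : ZMod 2) :
    ({g | c g = v}).ncard = ({g | c g = 0}).ncard := by
  have key : ∀ w : ZMod 2, ({g | c g = w}).ncard = ({g | c g = w + 1}).ncard := by
    intro w
    apply le_antisymm (class_le hcol hs₀ hs₀ne w)
    have h2 := class_le hcol hs₀ hs₀ne (w + 1)
    have h11 : w + 1 + 1 = w := by
      rw [add_assoc, (by decide : (1 : ZMod 2) + 1 = 0), add_zero]
    rw [h11] at h2
    exact h2
  rcases (by decide : ∀ p : ZMod 2, p = 0 ∨ p = 1) v with hv | hv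
  · rw [hv]
  · rw [hv]
    have h0 := key 0
    rw [zero_add] at h0
    exact h0.symm

lemma card_partition {G : Type*} [Group G] [Fintype G] [DecidableEq G] (c : G → ZMod 2) :
    Nat.card G = ({g | c g = 0}).ncard + ({g | c g = 1}).ncard := by
  rw [← Set.ncard_univ]
  rw [show (Set.univ : Set G) = {g | c g = 0} ∪ {g | c g = 1} by
    ext g
    simp only [Set.mem_univ, Set.mem_union, Set.mem_setOf_eq, true_iff]
    exact (by decide : ∀ p : ZMod 2, p = 0 ∨ p = 1) (c g)]
  apply Set.ncard_union_eq
  · rw [Set.disjoint_left]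
    intro g h0 h1
    rw [Set.mem_setOf_eq] at h0 h1
    rw [h0] at h1
    exact (by decide : (0 : ZMod 2) ≠ 1) h1
  · exact Set.toFinite _
  · exact Set.toFinite _

end WreathAux

open WreathAux in
/-- Lemma 1 of the paper: if `Cay(G, S)` is bipartite and has an induced subgraph of
maximum degree at most 1 on more than half its vertices, then the same is true of the
Cayley graph of `Z₂ ≀ G` with the canonical generating set `Ŝ`. -/
theorem wreath_lemma (G : Type*) [Group G] [Fintype G] [DecidableEq G]
    (S : Set G) (hgen : Subgroup.closure S = ⊤)
    (hbip : (cayley G S).Colorable 2)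
    (H : Set G) (hH : 2 * H.ncard > Nat.card G)
    (hH1 : ∀ g ∈ H, ({h ∈ H | (cayley G S).Adj g h}).ncard ≤ 1) :
    (cayley (Wr G) (wS S)).Colorable 2 ∧
      ∃ K : Set (Wr G), 2 * K.ncard > Nat.card (Wr G) ∧
        ∀ x ∈ K, ({y ∈ K | (cayley (Wr G) (wS S)).Adj x y}).ncard ≤ 1 := by
  classical
  obtain ⟨C⟩ := hbip
  set c : G → ZMod 2 := fun g => if C g = 0 then 0 else 1 with hcdef
  have hcol : ∀ {g h : G}, (cayley G S).Adj g h → c g ≠ c h := by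
    intro g h hadj
    have hne := C.valid hadj
    exact (by decide : ∀ u v : Fin 2, u ≠ v →
      (if u = 0 then (0 : ZMod 2) else 1) ≠ (if v = 0 then 0 else 1)) _ _ hne
  refine ⟨wreath_colorable c hcol, ?_⟩
  by_cases hex : ∃ s, s ∈ S ∧ s ≠ 1
  · obtain ⟨s₀, hs₀, hs₀ne⟩ := hex
    refine ⟨Kset S H c, ?_, K_deg hcol hH1⟩
    set m := ({g | c g = 0}).ncard with hm
    have hpart : Nat.card G = m + m := by
      rw [card_partition c, class_eq hcol hs₀ hs₀ne 1]
    have hHm : H.ncard ≥ m + 1 := by omega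
    have hcardW : Nat.card (Wr G) = 2 ^ Fintype.card G * Nat.card G := by
      rw [Nat.card_congr (wrEquiv G), Nat.card_prod, Nat.card_fun]
      congr 2
      · rw [Nat.card_eq_fintype_card, ZMod.card 2]
      · rw [Nat.card_eq_fintype_card]
    rw [K_card]
    have hf : ∀ a : G → ZMod 2, m ≤ ({g | KsetP S H c a g}).ncard := by
      intro a
      by_cases haD : a ∈ Dset H
      · rw [fiber_D haD]; omega
      · rw [fiber_nD haD, class_eq hcol hs₀ hs₀ne _]
    have h0D : (0 : G → ZMod 2) ∈ Dset H := fun h _ => rfl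
    have hstrict : m < ({g | KsetP S H c (0 : G → ZMod 2) g}).ncard := by
      rw [fiber_D h0D]; omega
    have hsum := Finset.sum_lt_sum (fun (a : G → ZMod 2) (_ : a ∈ Finset.univ) => hf a)
      ⟨(0 : G → ZMod 2), Finset.mem_univ _, hstrict⟩
    rw [Finset.sum_const, smul_eq_mul, Finset.card_univ] at hsum
    have hc2 : Fintype.card (G → ZMod 2) = 2 ^ Fintype.card G := by
      rw [Fintype.card_fun, ZMod.card 2]
    rw [hc2] at hsum
    rw [hcardW, hpart, Nat.mul_add]
    set Q := 2 ^ Fintype.card G with hQ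
    set T := ∑ a : G → ZMod 2, ({g | KsetP S H c a g}).ncard with hT
    omega
  · push_neg at hex
    have hG : ∀ g : G, g = 1 := by
      intro g
      have hmem : g ∈ Subgroup.closure S := by rw [hgen]; trivial
      have hle : Subgroup.closure S ≤ ⊥ := by
        rw [Subgroup.closure_le]
        intro s hs
        simp [hex s hs]
      exact Subgroup.mem_bot.mp (hle hmem)
    refine ⟨Set.univ, ?_, ?_⟩
    · rw [Set.ncard_univ]
      have hpos : 0 < Nat.card (Wr G) := Nat.card_pos
      omega
    · intro x _
      rw [Set.ncard_le_one_iff]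
      rintro y z ⟨_, hyA⟩ ⟨_, hzA⟩
      have form : ∀ w : Wr G, (cayley (Wr G) (wS S)).Adj x w →
          w.g = x.g ∧ w.a = fun t => x.a t + if t = x.g then 1 else 0 := by
        intro w hwA
        rcases adj_cases hwA with h | ⟨_, hadj⟩
        · exact h
        · exfalso
          rw [cayley, SimpleGraph.fromRel_adj] at hadj
          exact hadj.1 ((hG x.g).trans (hG w.g).symm)
      obtain ⟨hyg, hya⟩ := form y hyA
      obtain ⟨hzg, hza⟩ := form z hzA
      exact Wr.ext' (hya.trans hza.symm) (hyg.trans hzg.symm)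
end

section
/- For every d ≥ 2 there exists a finite group G of order a power of 2 with an inverse-closed identity-free generating set S of size d such that Cay(G,S) is bipartite and admits an induced subgraph of maximum degree at most 1 on strictly more than half its vertices. -/
/-- `S` is an inverse-closed, identity-free generating set of `G` of size `d`, the Cayley
graph `Cay(G, S)` is bipartite, and it admits an induced subgraph of maximum degree at
most 1 on strictly more than half of its vertices. -/
def GoodBipartiteCayley (G : Type*) [Group G] (S : Set G) (d : ℕ) : Prop :=
  (∀ s ∈ S, s⁻¹ ∈ S) ∧ (1 : G) ∉ S ∧ Subgroup.closure S = ⊤ ∧ S.ncard = d ∧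
    (cayley G S).Colorable 2 ∧
    ∃ H : Set G, 2 * H.ncard > Nat.card G ∧
      ∀ g ∈ H, ({h ∈ H | (cayley G S).Adj g h}).ncard ≤ 1

set_option linter.unusedSectionVars false

/-! ### Helper machinery -/

namespace Wr

variable {G : Type*} [Group G]

theorem ext_iff' (x y : Wr G) : x = y ↔ x.a = y.a ∧ x.g = y.g := by
  cases x; cases y; simp

theorem mk_eq_mk {a a' : G → ZMod 2} {g g' : G} :
    (⟨a, g⟩ : Wr G) = ⟨a', g'⟩ ↔ a = a' ∧ g = g' := by
  simp [ext_iff']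

def equivProd : Wr G ≃ (G → ZMod 2) × G where
  toFun w := (w.a, w.g)
  invFun p := ⟨p.1, p.2⟩
  left_inv w := by cases w; rfl
  right_inv p := by cases p; rfl

instance [Fintype G] [DecidableEq G] : Fintype (Wr G) :=
  Fintype.ofEquiv _ equivProd.symm

instance [Fintype G] [DecidableEq G] : DecidableEq (Wr G) := fun x y =>
  decidable_of_iff _ (ext_iff' x y).symm

theorem card_wr [Fintype G] [DecidableEq G] :
    Fintype.card (Wr G) = 2 ^ (Fintype.card G) * Fintype.card G := by
  rw [Fintype.card_congr (equivProd (G := G))]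
  simp [Fintype.card_fun]

variable [DecidableEq G]

/-- indicator function of `{g}`. -/
def dg (g : G) : G → ZMod 2 := fun t => if t = g then 1 else 0

theorem dg_self (g : G) : dg g g = 1 := by simp [dg]

theorem dg_ne {g t : G} (h : t ≠ g) : dg g t = 0 := by simp [dg, h]

theorem mul_mk0 (w : Wr G) (s : G) : w * ⟨0, s⟩ = ⟨w.a, w.g * s⟩ := by
  rw [mul_def, mk_eq_mk]
  constructor
  · funext t; simp [Pi.zero_apply]
  · rfl

theorem mul_wgen (w : Wr G) : w * wgen G = ⟨w.a + dg w.g, w.g⟩ := by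
  rw [mul_def, mk_eq_mk]
  constructor
  · congr 1
    funext t
    simp only [wgen, dg]
    congr 1
    simp [inv_mul_eq_one, eq_comm]
  · exact mul_one _

theorem wgen_a_one : (wgen G).a 1 = 1 := by simp [wgen]

theorem wgen_g : (wgen G).g = 1 := rfl

theorem mk0_g (s : G) : (Wr.mk 0 s).g = s := rfl

end Wr

set_option linter.unusedSectionVars false
/-! ### The inductive invariant -/

structure Gad (G : Type) [Group G] [Fintype G] [DecidableEq G] where
  S : Finset G
  sym : ∀ s ∈ S, s⁻¹ ∈ S
  not_one : (1 : G) ∉ S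
  gen : Subgroup.closure (S : Set G) = ⊤
  card2 : ∃ k : ℕ, Fintype.card G = 2 ^ k
  φ : G → ZMod 2
  hφ : ∀ g : G, ∀ s ∈ S, φ (g * s) = φ g + 1
  x : G
  T : G → Finset G
  s₀ : G
  hs₀ : s₀ ∈ S
  I1a : ∀ s ∈ S, x * s ∈ T s
  I1b : ∀ s ∈ S, x ∉ T s
  I3 : ∀ s ∈ S, ∀ g ∈ T s, ∃ e ∈ S, g * e ∉ T s ∧ ∀ s' ∈ S, s' ≠ e → g * s' ∈ T s
  I4 : ∀ v : G, v ≠ x → (∀ s ∈ S, v ∉ T s) → ∀ s₁ ∈ S, ∀ s₂ ∈ S, ∀ t₁ ∈ S, ∀ t₂ ∈ S,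
        v * s₁ ∈ T t₁ → v * s₂ ∈ T t₂ → s₁ = s₂
  I5 : ∀ s ∈ S, ∀ s' ∈ S, s ≠ s' → ∀ g ∈ T s, g ∉ T s'
  μ : G → G → G
  hμinj : ∀ s ∈ S, Function.Injective (μ s)
  hμmem : ∀ s ∈ S, ∀ g ∈ T s, μ s g ∈ T s
  hμφ : ∀ s ∈ S, ∀ g ∈ T s, φ (μ s g) = φ g + 1

namespace Gad

lemma zmod2_ne {a b : ZMod 2} (h : a ≠ b) : a = b + 1 := by revert a b; decide
lemma zmod2_add_one_ne (a : ZMod 2) : a + 1 ≠ a := by revert a; decide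
lemma zmod2_aa (c : ZMod 2) : c + 1 + 1 = c := by revert c; decide

variable {G : Type} [Group G] [Fintype G] [DecidableEq G] (P : Gad G)

def CF : Finset G := Finset.univ.filter (fun v => P.φ v ≠ P.φ P.x)
def BF : Finset G := P.S.biUnion P.T
def WF : Finset G := insert P.x P.BF
def HF : Finset G := (P.CF \ P.WF) ∪ (P.WF \ P.CF)

lemma mem_CF {v : G} : v ∈ P.CF ↔ P.φ v ≠ P.φ P.x := by simp [CF]
lemma mem_BF {v : G} : v ∈ P.BF ↔ ∃ s ∈ P.S, v ∈ P.T s := by simp [BF]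
lemma mem_WF {v : G} : v ∈ P.WF ↔ v = P.x ∨ ∃ s ∈ P.S, v ∈ P.T s := by
  simp [WF, mem_BF]
lemma x_not_mem_CF : P.x ∉ P.CF := by simp [mem_CF]
lemma x_not_mem_BF : P.x ∉ P.BF := by
  rw [mem_BF]; rintro ⟨s, hs, hx⟩; exact P.I1b s hs hx

lemma mem_HF {v : G} : v ∈ P.HF ↔ (v ∈ P.CF ∧ v ∉ P.WF) ∨ (v ∈ P.WF ∧ v ∉ P.CF) := by
  simp [HF, Finset.mem_union, Finset.mem_sdiff]

lemma adj_iff {v u : G} : (cayley G ↑P.S).Adj v u ↔ ∃ s ∈ P.S, u = v * s := by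
  unfold cayley
  rw [SimpleGraph.fromRel_adj]
  constructor
  · rintro ⟨hne, h | h⟩
    · exact ⟨v⁻¹ * u, Finset.mem_coe.mp h, by group⟩
    · refine ⟨(u⁻¹ * v)⁻¹, P.sym _ (Finset.mem_coe.mp h), by group⟩
  · rintro ⟨s, hs, rfl⟩
    refine ⟨?_, Or.inl (by rw [inv_mul_cancel_left]; exact Finset.mem_coe.mpr hs)⟩
    intro hEq
    apply P.not_one
    have hs1 : s = 1 := mul_eq_left.mp hEq.symm
    rwa [← hs1]

/-- Degree part: the neighbourhood of any `v ∈ HF` inside `HF` is a subsingleton. -/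
lemma deg_subsingleton {v : G} (hv : v ∈ P.HF) :
    Set.Subsingleton {h ∈ (↑P.HF : Set G) | (cayley G ↑P.S).Adj v h} := by
  have hWF_class : ∀ u ∈ P.HF, P.φ u ≠ P.φ P.x → (u ∈ P.WF ↔ False) →
      True := fun _ _ _ _ => trivial
  intro h₁ hm₁ h₂ hm₂
  obtain ⟨hH₁, hadj₁⟩ := hm₁
  obtain ⟨hH₂, hadj₂⟩ := hm₂
  rw [Finset.mem_coe] at hH₁ hH₂
  rw [P.adj_iff] at hadj₁ hadj₂
  obtain ⟨s₁, hs₁, rfl⟩ := hadj₁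
  obtain ⟨s₂, hs₂, rfl⟩ := hadj₂
  rw [P.mem_HF] at hv
  rcases hv with ⟨hvC, hvW⟩ | ⟨hvW, hvC⟩
  · -- v in C \ W ; neighbours have colour φ x, so they lie in W
    have hφv : P.φ v = P.φ P.x + 1 := zmod2_ne (P.mem_CF.mp hvC)
    have hcol : ∀ s ∈ P.S, P.φ (v * s) = P.φ P.x := by
      intro s hs
      have h11 : ∀ c : ZMod 2, c + 1 + 1 = c := by decide
      rw [P.hφ v s hs, hφv, h11]
    have hW : ∀ s ∈ P.S, v * s ∈ P.HF → ∃ t ∈ P.S, v * s ∈ P.T t := by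
      intro s hs hmem
      rcases P.mem_HF.mp hmem with ⟨hC, _⟩ | ⟨hW, _⟩
      · exact absurd (P.mem_CF.mp hC) (by simp [hcol s hs])
      · rcases P.mem_WF.mp hW with hx | hT
        · -- v * s = x  →  v ∈ T s⁻¹ ⊆ W, contradiction
          exfalso
          have hvx : v = P.x * s⁻¹ := by rw [← hx]; group
          have : v ∈ P.T s⁻¹ := hvx ▸ P.I1a s⁻¹ (P.sym s hs)
          exact hvW (P.mem_WF.mpr (Or.inr ⟨s⁻¹, P.sym s hs, this⟩))
        · exact hT
    obtain ⟨t₁, ht₁, hT₁⟩ := hW s₁ hs₁ hH₁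
    obtain ⟨t₂, ht₂, hT₂⟩ := hW s₂ hs₂ hH₂
    have hvx : v ≠ P.x := by
      intro h; exact (P.mem_CF.mp hvC) (by rw [h])
    have hvT : ∀ s ∈ P.S, v ∉ P.T s := by
      intro s hs hmem
      exact hvW (P.mem_WF.mpr (Or.inr ⟨s, hs, hmem⟩))
    have := P.I4 v hvx hvT s₁ hs₁ s₂ hs₂ t₁ ht₁ t₂ ht₂ hT₁ hT₂
    rw [this]
  · -- v ∈ W \ C : neighbours are in C, so in HF iff not in W
    have hφv : P.φ v = P.φ P.x := by
      have := P.mem_CF.not.mp hvC; simpa using this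
    have hnW : ∀ s ∈ P.S, v * s ∈ P.HF → v * s ∉ P.WF := by
      intro s hs hmem
      rcases P.mem_HF.mp hmem with ⟨_, hnW⟩ | ⟨_, hC⟩
      · exact hnW
      · exfalso
        apply hC
        rw [P.mem_CF, P.hφ v s hs, hφv]
        exact zmod2_add_one_ne _
    rcases P.mem_WF.mp hvW with rfl | ⟨t, ht, hvT⟩
    · -- v = x : all neighbours are in W: neighbourhood empty
      exfalso
      exact hnW s₁ hs₁ hH₁ (P.mem_WF.mpr (Or.inr ⟨s₁, hs₁, P.I1a s₁ hs₁⟩))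
    · obtain ⟨e, he, hexit, huniq⟩ := P.I3 t ht v hvT
      have h1 : s₁ = e := by
        by_contra hne
        exact hnW s₁ hs₁ hH₁ (P.mem_WF.mpr (Or.inr ⟨t, ht, huniq s₁ hs₁ hne⟩))
      have h2 : s₂ = e := by
        by_contra hne
        exact hnW s₂ hs₂ hH₂ (P.mem_WF.mpr (Or.inr ⟨t, ht, huniq s₂ hs₂ hne⟩))
      rw [h1, h2]

end Gad
namespace Gad
variable {G : Type} [Group G] [Fintype G] [DecidableEq G] (P : Gad G)

/-- complement class -/
def DF : Finset G := Finset.univ.filter (fun v => P.φ v = P.φ P.x)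

lemma card_CF_eq_DF : P.CF.card = P.DF.card := by
  apply le_antisymm
  · apply Finset.card_le_card_of_injOn (fun v => v * P.s₀)
    · intro v hv
      rw [Finset.mem_coe, mem_CF] at hv
      rw [Finset.mem_coe, DF, Finset.mem_filter]
      refine ⟨Finset.mem_univ _, ?_⟩
      rw [P.hφ v P.s₀ P.hs₀, zmod2_ne hv, zmod2_aa]
    · intro a _ b _ h
      exact mul_right_cancel h
  · apply Finset.card_le_card_of_injOn (fun v => v * P.s₀)
    · intro v hv
      simp only [Finset.mem_coe, DF, Finset.mem_filter] at hv
      rw [Finset.mem_coe, mem_CF, P.hφ v P.s₀ P.hs₀, hv.2]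
      exact zmod2_add_one_ne _
    · intro a _ b _ h
      exact mul_right_cancel h

lemma two_card_CF : 2 * P.CF.card = Fintype.card G := by
  have h := Finset.card_filter_add_card_filter_not
    (s := (Finset.univ : Finset G)) (p := fun v => P.φ v ≠ P.φ P.x)
  have h2 : Finset.univ.filter (fun v => ¬ (P.φ v ≠ P.φ P.x)) = P.DF := by
    apply Finset.filter_congr
    intro v _
    simp
  rw [h2] at h
  have := P.card_CF_eq_DF
  unfold CF at this ⊢
  simp only [Finset.card_univ] at h
  omega

lemma piece_balance : ∀ s ∈ P.S,
    ((P.T s).filter (fun v => P.φ v = P.φ P.x)).card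
      = ((P.T s).filter (fun v => P.φ v ≠ P.φ P.x)).card := by
  intro s hs
  apply le_antisymm
  · apply Finset.card_le_card_of_injOn (P.μ s)
    · intro v hv
      rw [Finset.mem_coe, Finset.mem_filter] at hv ⊢
      refine ⟨P.hμmem s hs v hv.1, ?_⟩
      rw [P.hμφ s hs v hv.1, hv.2]
      exact zmod2_add_one_ne _
    · intro a _ b _ h
      exact P.hμinj s hs h
  · apply Finset.card_le_card_of_injOn (P.μ s)
    · intro v hv
      rw [Finset.mem_coe, Finset.mem_filter] at hv ⊢
      refine ⟨P.hμmem s hs v hv.1, ?_⟩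
      rw [P.hμφ s hs v hv.1, zmod2_ne hv.2, zmod2_aa]
    · intro a _ b _ h
      exact P.hμinj s hs h

lemma BF_balance :
    (P.BF.filter (fun v => P.φ v = P.φ P.x)).card
      = (P.BF.filter (fun v => P.φ v ≠ P.φ P.x)).card := by
  unfold BF
  rw [Finset.filter_biUnion, Finset.filter_biUnion]
  rw [Finset.card_biUnion, Finset.card_biUnion]
  · exact Finset.sum_congr rfl (fun s hs => P.piece_balance s hs)
  · intro a ha b hb hab
    simp only [Function.onFun]
    rw [Finset.disjoint_left]
    intro v hv hv'
    rw [Finset.mem_filter] at hv hv'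
    exact P.I5 a ha b hb hab v hv.1 hv'.1
  · intro a ha b hb hab
    simp only [Function.onFun]
    rw [Finset.disjoint_left]
    intro v hv hv'
    rw [Finset.mem_filter] at hv hv'
    exact P.I5 a ha b hb hab v hv.1 hv'.1

lemma card_HF : P.HF.card = P.CF.card + 1 := by
  have hdisj : Disjoint (P.CF \ P.WF) (P.WF \ P.CF) := by
    rw [Finset.disjoint_left]
    intro v hv hv'
    rw [Finset.mem_sdiff] at hv hv'
    exact hv'.2 hv.1
  have hcard : P.HF.card = (P.CF \ P.WF).card + (P.WF \ P.CF).card := by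
    rw [HF, Finset.card_union_of_disjoint hdisj]
  -- (CF \ WF).card = CF.card - (CF ∩ WF).card
  have h1 : (P.CF \ P.WF).card + (P.CF ∩ P.WF).card = P.CF.card :=
    Finset.card_sdiff_add_card_inter _ _
  -- CF ∩ WF = CF ∩ BF  (since x ∉ CF)
  have h2 : P.CF ∩ P.WF = P.CF ∩ P.BF := by
    ext v
    simp only [Finset.mem_inter, WF, Finset.mem_insert]
    constructor
    · rintro ⟨hC, rfl | hB⟩
      · exact absurd hC P.x_not_mem_CF
      · exact ⟨hC, hB⟩
    · rintro ⟨hC, hB⟩; exact ⟨hC, Or.inr hB⟩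
  -- WF \ CF = insert x (BF \ CF)
  have h3 : P.WF \ P.CF = insert P.x (P.BF \ P.CF) := by
    ext v
    simp only [WF, Finset.mem_sdiff, Finset.mem_insert]
    constructor
    · rintro ⟨rfl | hB, hC⟩
      · exact Or.inl rfl
      · exact Or.inr ⟨hB, hC⟩
    · rintro (rfl | ⟨hB, hC⟩)
      · exact ⟨Or.inl rfl, P.x_not_mem_CF⟩
      · exact ⟨Or.inr hB, hC⟩
  have h4 : (P.WF \ P.CF).card = 1 + (P.BF \ P.CF).card := by
    rw [h3, Finset.card_insert_of_notMem, add_comm]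
    intro hmem
    exact P.x_not_mem_BF (Finset.mem_sdiff.mp hmem).1
  -- BF \ CF = BF.filter (φ = φ x), CF ∩ BF = BF.filter (φ ≠ φ x)
  have h5 : P.BF \ P.CF = P.BF.filter (fun v => P.φ v = P.φ P.x) := by
    ext v
    simp only [Finset.mem_sdiff, Finset.mem_filter, mem_CF, not_not]
    try tauto
  have h6 : P.CF ∩ P.BF = P.BF.filter (fun v => P.φ v ≠ P.φ P.x) := by
    ext v
    simp only [Finset.mem_inter, Finset.mem_filter, mem_CF]
    try tauto
  have hbal := P.BF_balance
  rw [h5] at h4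
  rw [h2, h6] at h1
  rw [hcard, h4]
  omega

/-- The main abstract theorem. -/
theorem toGood : GoodBipartiteCayley G (↑P.S) P.S.card := by
  refine ⟨?_, ?_, ?_, ?_, ?_, ?_⟩
  · intro s hs; exact Finset.mem_coe.mpr (P.sym s (Finset.mem_coe.mp hs))
  · intro h; exact P.not_one (Finset.mem_coe.mp h)
  · exact P.gen
  · exact Set.ncard_coe_finset _
  · -- colorable
    apply SimpleGraph.Colorable.mono (n := 2) le_rfl
    refine ⟨SimpleGraph.Coloring.mk (fun v => if P.φ v = P.φ P.x then 0 else 1) ?_⟩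
    intro v w hadj
    rw [P.adj_iff] at hadj
    obtain ⟨s, hs, rfl⟩ := hadj
    by_cases h : P.φ v = P.φ P.x
    · have : P.φ (v * s) ≠ P.φ P.x := by
        rw [P.hφ v s hs, h]; exact zmod2_add_one_ne _
      simp [h, this]
    · have : P.φ (v * s) = P.φ P.x := by
        rw [P.hφ v s hs, zmod2_ne h, zmod2_aa]
      simp [h, this]
  · refine ⟨↑P.HF, ?_, ?_⟩
    · rw [Set.ncard_coe_finset, Nat.card_eq_fintype_card, P.card_HF]
      have := P.two_card_CF
      omega
    · intro g hg
      have hsub := P.deg_subsingleton (Finset.mem_coe.mp hg)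
      rcases hsub.eq_empty_or_singleton with h | ⟨a, h⟩
      · rw [h]; simp
      · rw [h]; simp
end Gad
namespace Gad
open Wr

variable {G : Type} [Group G] [Fintype G] [DecidableEq G] (P : Gad G)

/-- The lifted generating set. -/
def Sl : Finset (Wr G) := insert (wgen G) (P.S.image (Wr.mk 0))

lemma mk0_injective : Function.Injective (Wr.mk (0 : G → ZMod 2)) := by
  intro a b h
  exact (Wr.mk_eq_mk.mp h).2

lemma wgen_ne_mk0 (s : G) : wgen G ≠ Wr.mk 0 s := by
  intro h
  have := congrFun (congrArg Wr.a h) 1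
  rw [wgen_a_one] at this
  simp at this

lemma mem_Sl {z : Wr G} : z ∈ P.Sl ↔ z = wgen G ∨ ∃ s ∈ P.S, z = Wr.mk 0 s := by
  simp only [Sl, Finset.mem_insert, Finset.mem_image]
  constructor
  · rintro (h | ⟨s, hs, rfl⟩)
    · exact Or.inl h
    · exact Or.inr ⟨s, hs, rfl⟩
  · rintro (h | ⟨s, hs, rfl⟩)
    · exact Or.inl h
    · exact Or.inr ⟨s, hs, rfl⟩

lemma card_Sl : P.Sl.card = P.S.card + 1 := by
  rw [Sl, Finset.card_insert_of_notMem, Finset.card_image_of_injective _ mk0_injective]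
  intro h
  obtain ⟨s, _, hs⟩ := Finset.mem_image.mp h
  exact wgen_ne_mk0 s hs.symm

/-- lifted coloring -/
def wφ : Wr G → ZMod 2 := fun w => (∑ t : G, w.a t) + P.φ w.g

lemma sum_dg (g : G) : (∑ t : G, Wr.dg g t) = 1 := by
  unfold Wr.dg
  rw [Finset.sum_ite_eq' Finset.univ g (fun _ => (1 : ZMod 2))]
  simp

lemma sum_add_dg (a : G → ZMod 2) (g : G) :
    (∑ t : G, (a + Wr.dg g) t) = (∑ t : G, a t) + 1 := by
  simp only [Pi.add_apply]
  rw [Finset.sum_add_distrib, sum_dg]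

/-- the lifted special vertex -/
def wx : Wr G := Wr.mk 0 P.x

/-- the full copy piece -/
def copyF : Finset (Wr G) := Finset.univ.filter (fun v => v.a = Wr.dg P.x)

/-- the sub-wreath piece over `T s` -/
def subwF (s : G) : Finset (Wr G) :=
  Finset.univ.filter (fun v => v.g ∈ P.T s ∧ ∀ t, t ∉ P.T s → v.a t = 0)

lemma mem_copyF {v : Wr G} : v ∈ P.copyF ↔ v.a = Wr.dg P.x := by simp [copyF]

lemma mem_subwF {v : Wr G} {s : G} :
    v ∈ P.subwF s ↔ v.g ∈ P.T s ∧ ∀ t, t ∉ P.T s → v.a t = 0 := by simp [subwF]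

/-- the lifted T-family -/
def wT : Wr G → Finset (Wr G) := fun z => if z.g = 1 then P.copyF else P.subwF z.g

lemma wT_wgen : P.wT (wgen G) = P.copyF := by simp [wT, wgen_g]

lemma wT_mk0 {s : G} (hs : s ∈ P.S) : P.wT (Wr.mk 0 s) = P.subwF s := by
  have : s ≠ 1 := fun h => P.not_one (h ▸ hs)
  simp [wT, mk0_g, this]

/-- the lifted μ -/
def wμ : Wr G → Wr G → Wr G := fun z =>
  if z.g = 1 then (fun v => v * Wr.mk 0 P.s₀) else (fun v => ⟨v.a + Wr.dg v.g, v.g⟩)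

/-- zmod2 pointwise solving -/
lemma zmod2_solve {a b c : ZMod 2} (h : a + b = c) : a = c + b := by
  revert a b c; decide

end Gad
namespace Gad
open Wr

variable {G : Type} [Group G] [Fintype G] [DecidableEq G] (P : Gad G)

lemma wgen_inv : (wgen G)⁻¹ = wgen G := by
  rw [Wr.inv_def]
  unfold wgen
  rw [Wr.mk_eq_mk]
  constructor
  · funext t; simp
  · exact inv_one

lemma mk0_inv (s : G) : (Wr.mk 0 s)⁻¹ = Wr.mk 0 s⁻¹ := by
  rw [Wr.inv_def, Wr.mk_eq_mk]
  exact ⟨by funext t; rfl, rfl⟩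

lemma lift_sym : ∀ z ∈ P.Sl, z⁻¹ ∈ P.Sl := by
  intro z hz
  rcases P.mem_Sl.mp hz with rfl | ⟨s, hs, rfl⟩
  · rw [wgen_inv]; exact P.mem_Sl.mpr (Or.inl rfl)
  · rw [mk0_inv]; exact P.mem_Sl.mpr (Or.inr ⟨s⁻¹, P.sym s hs, rfl⟩)

lemma lift_not_one : (1 : Wr G) ∉ P.Sl := by
  intro h
  rcases P.mem_Sl.mp h with h | ⟨s, hs, h⟩
  · have := congrFun (congrArg Wr.a h.symm) 1
    rw [wgen_a_one, Wr.one_def] at this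
    simp at this
  · have := (Wr.mk_eq_mk.mp (Wr.one_def.symm.trans h)).2
    exact P.not_one (this ▸ hs)

/-- the embedding `g ↦ (0, g)` as a group hom -/
def homMk0 : G →* Wr G where
  toFun := Wr.mk 0
  map_one' := rfl
  map_mul' := fun a b => by
    show Wr.mk 0 (a * b) = Wr.mk 0 a * Wr.mk 0 b
    rw [Wr.mul_mk0]

lemma lift_gen : Subgroup.closure ((P.Sl : Set (Wr G))) = ⊤ := by
  rw [Subgroup.eq_top_iff']
  set K := Subgroup.closure ((P.Sl : Set (Wr G))) with hK
  have hwgen : wgen G ∈ K := Subgroup.subset_closure (by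
    exact Finset.mem_coe.mpr (P.mem_Sl.mpr (Or.inl rfl)))
  have hmk0 : ∀ g : G, Wr.mk 0 g ∈ K := by
    have hle : Subgroup.closure (P.S : Set G) ≤ Subgroup.comap (homMk0 (G := G)) K := by
      apply Subgroup.closure_le _ |>.mpr
      intro s hs
      apply Subgroup.subset_closure
      exact Finset.mem_coe.mpr (P.mem_Sl.mpr (Or.inr ⟨s, Finset.mem_coe.mp hs, rfl⟩))
    rw [P.gen] at hle
    intro g
    exact hle (Subgroup.mem_top g)
  have hdg : ∀ h : G, (⟨Wr.dg h, 1⟩ : Wr G) ∈ K := by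
    intro h
    have e1 : Wr.mk 0 h * wgen G = ⟨Wr.dg h, h⟩ := by
      rw [Wr.mul_wgen, Wr.mk_eq_mk]
      exact ⟨zero_add _, rfl⟩
    have e2 : (⟨Wr.dg h, h⟩ : Wr G) * Wr.mk 0 h⁻¹ = ⟨Wr.dg h, 1⟩ := by
      rw [Wr.mul_mk0, Wr.mk_eq_mk]
      exact ⟨rfl, mul_inv_cancel h⟩
    have := mul_mem (mul_mem (hmk0 h) hwgen) (hmk0 h⁻¹)
    rwa [e1, e2] at this
  have hind : ∀ F : Finset G, (⟨fun t => if t ∈ F then 1 else 0, 1⟩ : Wr G) ∈ K := by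
    intro F
    induction F using Finset.induction_on with
    | empty =>
      have : (⟨fun t => if t ∈ (∅ : Finset G) then 1 else 0, 1⟩ : Wr G) = 1 := by
        rw [Wr.one_def, Wr.mk_eq_mk]
        exact ⟨by funext t; simp, rfl⟩
      rw [this]; exact one_mem K
    | insert a F' ha ih =>
      have e : (⟨Wr.dg a, 1⟩ : Wr G) * ⟨fun t => if t ∈ F' then 1 else 0, 1⟩
          = ⟨fun t => if t ∈ insert a F' then 1 else 0, 1⟩ := by
        rw [Wr.mul_def, Wr.mk_eq_mk]
        constructor
        · funext t
          simp only [Pi.add_apply, inv_one, one_mul, Finset.mem_insert]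
          by_cases h1 : t = a
          · subst h1
            simp [Wr.dg_self, ha]
          · rw [Wr.dg_ne h1]
            by_cases h2 : t ∈ F' <;> simp [h1, h2]
        · exact one_mul 1
      rw [← e]
      exact mul_mem (hdg a) ih
  intro w
  have : w = (⟨w.a, 1⟩ : Wr G) * Wr.mk 0 w.g := by
    rw [Wr.mul_mk0, Wr.mk_eq_mk]
    exact ⟨rfl, (one_mul _).symm⟩
  rw [this]
  apply mul_mem _ (hmk0 w.g)
  have haw : w.a = fun t => if t ∈ Finset.univ.filter (fun t => w.a t = 1) then 1 else 0 := by
    funext t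
    have : w.a t = 0 ∨ w.a t = 1 := by
      generalize w.a t = z; revert z; decide
    rcases this with h | h <;> simp [h]
  rw [haw]
  exact hind _

include P in
lemma lift_card2 : ∃ k : ℕ, Fintype.card (Wr G) = 2 ^ k := by
  obtain ⟨k, hk⟩ := P.card2
  exact ⟨Fintype.card G + k, by rw [Wr.card_wr, hk, pow_add]⟩

lemma lift_hφ : ∀ w : Wr G, ∀ z ∈ P.Sl, P.wφ (w * z) = P.wφ w + 1 := by
  intro w z hz
  rcases P.mem_Sl.mp hz with rfl | ⟨s, hs, rfl⟩
  · rw [Wr.mul_wgen]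
    show (∑ t : G, (w.a + Wr.dg w.g) t) + P.φ w.g = _
    rw [sum_add_dg]
    unfold wφ
    ring
  · rw [Wr.mul_mk0]
    show (∑ t : G, w.a t) + P.φ (w.g * s) = _
    rw [P.hφ _ s hs]
    unfold wφ
    ring

end Gad
namespace Gad
open Wr

lemma zmod2_cancel {a b : ZMod 2} (h : a + b = b) : a = 0 := by revert a b; decide

variable {G : Type} [Group G] [Fintype G] [DecidableEq G] (P : Gad G)

lemma wgen_mem_Sl : wgen G ∈ P.Sl := P.mem_Sl.mpr (Or.inl rfl)

lemma mk0_mem_Sl {s : G} (hs : s ∈ P.S) : Wr.mk 0 s ∈ P.Sl :=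
  P.mem_Sl.mpr (Or.inr ⟨s, hs, rfl⟩)

lemma lift_I1a : ∀ z ∈ P.Sl, P.wx * z ∈ P.wT z := by
  intro z hz
  rcases P.mem_Sl.mp hz with rfl | ⟨s, hs, rfl⟩
  · rw [wT_wgen, Wr.mul_wgen]
    apply P.mem_copyF.mpr
    show (0 : G → ZMod 2) + Wr.dg P.x = Wr.dg P.x
    rw [zero_add]
  · rw [P.wT_mk0 hs, Wr.mul_mk0]
    apply P.mem_subwF.mpr
    exact ⟨P.I1a s hs, fun t _ => rfl⟩

lemma lift_I1b : ∀ z ∈ P.Sl, P.wx ∉ P.wT z := by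
  intro z hz hmem
  rcases P.mem_Sl.mp hz with rfl | ⟨s, hs, rfl⟩
  · rw [wT_wgen] at hmem
    have h0 : (0 : ZMod 2) = Wr.dg P.x P.x := congrFun (P.mem_copyF.mp hmem) P.x
    rw [Wr.dg_self] at h0
    exact absurd h0 (by decide)
  · rw [P.wT_mk0 hs] at hmem
    exact P.I1b s hs (P.mem_subwF.mp hmem).1

lemma lift_I5 : ∀ z ∈ P.Sl, ∀ z' ∈ P.Sl, z ≠ z' → ∀ v ∈ P.wT z, v ∉ P.wT z' := by
  have key : ∀ s ∈ P.S, ∀ v : Wr G, v ∈ P.copyF → v ∉ P.subwF s := by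
    intro s hs v hc hsub
    obtain ⟨_, hsupp⟩ := P.mem_subwF.mp hsub
    have h1 := congrFun (P.mem_copyF.mp hc) P.x
    rw [Wr.dg_self] at h1
    rw [hsupp P.x (P.I1b s hs)] at h1
    exact absurd h1 (by decide)
  intro z hz z' hz' hne v hv hv'
  rcases P.mem_Sl.mp hz with rfl | ⟨s, hs, rfl⟩ <;>
    rcases P.mem_Sl.mp hz' with rfl | ⟨s', hs', rfl⟩
  · exact hne rfl
  · rw [wT_wgen] at hv
    rw [P.wT_mk0 hs'] at hv'
    exact key s' hs' v hv hv'
  · rw [wT_wgen] at hv'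
    rw [P.wT_mk0 hs] at hv
    exact key s hs v hv' hv
  · have hss : s ≠ s' := fun h => hne (by rw [h])
    rw [P.wT_mk0 hs] at hv
    rw [P.wT_mk0 hs'] at hv'
    exact P.I5 s hs s' hs' hss v.g (P.mem_subwF.mp hv).1 (P.mem_subwF.mp hv').1

lemma lift_I3 : ∀ z ∈ P.Sl, ∀ v ∈ P.wT z,
    ∃ e ∈ P.Sl, v * e ∉ P.wT z ∧ ∀ z' ∈ P.Sl, z' ≠ e → v * z' ∈ P.wT z := by
  intro z hz v hv
  rcases P.mem_Sl.mp hz with rfl | ⟨s, hs, rfl⟩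
  · rw [wT_wgen] at hv ⊢
    refine ⟨wgen G, P.wgen_mem_Sl, ?_, ?_⟩
    · intro hmem
      rw [Wr.mul_wgen] at hmem
      have h := P.mem_copyF.mp hmem
      have h2 := P.mem_copyF.mp hv
      rw [h2] at h
      have h3 : (Wr.dg P.x + Wr.dg v.g) v.g = Wr.dg P.x v.g := congrFun h v.g
      rw [Pi.add_apply, Wr.dg_self] at h3
      exact zmod2_add_one_ne _ h3
    · intro z' hz' hne
      rcases P.mem_Sl.mp hz' with rfl | ⟨s', _, rfl⟩
      · exact absurd rfl hne
      · rw [Wr.mul_mk0, P.mem_copyF]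
        have hva : v.a = Wr.dg P.x := P.mem_copyF.mp hv
        exact hva
  · rw [P.wT_mk0 hs] at hv ⊢
    obtain ⟨hg, hsupp⟩ := P.mem_subwF.mp hv
    obtain ⟨e, he, hexit, huniq⟩ := P.I3 s hs v.g hg
    refine ⟨Wr.mk 0 e, P.mk0_mem_Sl he, ?_, ?_⟩
    · intro hmem
      rw [Wr.mul_mk0] at hmem
      exact hexit (P.mem_subwF.mp hmem).1
    · intro z' hz' hne
      rcases P.mem_Sl.mp hz' with rfl | ⟨s', hs', rfl⟩
      · rw [Wr.mul_wgen]
        apply P.mem_subwF.mpr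
        refine ⟨hg, ?_⟩
        intro t ht
        have hne2 : t ≠ v.g := fun h => ht (h ▸ hg)
        show v.a t + Wr.dg v.g t = 0
        rw [hsupp t ht, Wr.dg_ne hne2, add_zero]
      · have hse : s' ≠ e := fun h => hne (by rw [h])
        rw [Wr.mul_mk0]
        exact P.mem_subwF.mpr ⟨huniq s' hs' hse, hsupp⟩

lemma lift_I4 : ∀ v : Wr G, v ≠ P.wx → (∀ z ∈ P.Sl, v ∉ P.wT z) →
    ∀ z₁ ∈ P.Sl, ∀ z₂ ∈ P.Sl, ∀ t₁ ∈ P.Sl, ∀ t₂ ∈ P.Sl,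
      v * z₁ ∈ P.wT t₁ → v * z₂ ∈ P.wT t₂ → z₁ = z₂ := by
  intro v hvx hvT z₁ hz₁ z₂ hz₂ t₁ ht₁ t₂ ht₂ h₁ h₂
  have notCopy : v ∉ P.copyF := by
    have := hvT (wgen G) P.wgen_mem_Sl
    rwa [wT_wgen] at this
  have notSub : ∀ s ∈ P.S, v ∉ P.subwF s := by
    intro s hs
    have := hvT (Wr.mk 0 s) (P.mk0_mem_Sl hs)
    rwa [P.wT_mk0 hs] at this
  have hitchar : ∀ z ∈ P.Sl, ∀ t ∈ P.Sl, v * z ∈ P.wT t →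
      (z = wgen G ∧ v.a + Wr.dg v.g = Wr.dg P.x) ∨
      (∃ s ∈ P.S, ∃ u ∈ P.S, z = Wr.mk 0 s ∧
         v.g * s ∈ P.T u ∧ ∀ w, w ∉ P.T u → v.a w = 0) := by
    intro z hz t ht hmem
    rcases P.mem_Sl.mp ht with rfl | ⟨u, hu, rfl⟩
    · rw [wT_wgen] at hmem
      rcases P.mem_Sl.mp hz with rfl | ⟨s, hs, rfl⟩
      · left
        rw [Wr.mul_wgen] at hmem
        exact ⟨rfl, P.mem_copyF.mp hmem⟩
      · exfalso
        rw [Wr.mul_mk0, P.mem_copyF] at hmem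
        have hva : v.a = Wr.dg P.x := hmem
        exact notCopy (P.mem_copyF.mpr hva)
    · rw [P.wT_mk0 hu] at hmem
      rcases P.mem_Sl.mp hz with rfl | ⟨s, hs, rfl⟩
      · exfalso
        rw [Wr.mul_wgen] at hmem
        obtain ⟨hg, hsupp⟩ := P.mem_subwF.mp hmem
        apply notSub u hu
        apply P.mem_subwF.mpr
        refine ⟨hg, ?_⟩
        intro w hw
        have h0 := hsupp w hw
        have hne : w ≠ v.g := fun h => hw (h ▸ hg)
        have : v.a w + Wr.dg v.g w = 0 := h0
        rwa [Wr.dg_ne hne, add_zero] at this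
      · right
        rw [Wr.mul_mk0] at hmem
        obtain ⟨hg, hsupp⟩ := P.mem_subwF.mp hmem
        exact ⟨s, hs, u, hu, rfl, hg, hsupp⟩
  have mixed : ∀ u ∈ P.S, (v.a + Wr.dg v.g = Wr.dg P.x) →
      (∀ w, w ∉ P.T u → v.a w = 0) → False := by
    intro u hu hc hsupp
    by_cases hgx : v.g = P.x
    · apply hvx
      have hva : v.a = 0 := by
        funext t
        have h := congrFun hc t
        rw [Pi.add_apply, hgx] at h
        exact zmod2_cancel h
      exact (Wr.ext_iff' v P.wx).mpr ⟨hva, hgx⟩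
    · have h := congrFun hc P.x
      have hxg : P.x ≠ v.g := fun hh => hgx hh.symm
      rw [Pi.add_apply, Wr.dg_self, Wr.dg_ne hxg, add_zero] at h
      rw [hsupp P.x (P.I1b u hu)] at h
      exact absurd h (by decide)
  rcases hitchar z₁ hz₁ t₁ ht₁ h₁ with ⟨rfl, hc₁⟩ | ⟨s₁, hs₁, u₁, hu₁, rfl, hg₁, hsupp₁⟩ <;>
    rcases hitchar z₂ hz₂ t₂ ht₂ h₂ with ⟨rfl, hc₂⟩ | ⟨s₂, hs₂, u₂, hu₂, rfl, hg₂, hsupp₂⟩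
  · rfl
  · exact (mixed u₂ hu₂ hc₁ hsupp₂).elim
  · exact (mixed u₁ hu₁ hc₂ hsupp₁).elim
  · -- both sub-wreath hits
    by_cases huu : u₁ = u₂
    · subst huu
      have hgnotu : v.g ∉ P.T u₁ := by
        intro hmem
        exact notSub u₁ hu₁ (P.mem_subwF.mpr ⟨hmem, hsupp₁⟩)
      by_cases hgx : v.g = P.x
      · have hs1u : s₁ = u₁ := by
          by_contra hne
          exact P.I5 s₁ hs₁ u₁ hu₁ hne (v.g * s₁) (by rw [hgx]; exact P.I1a s₁ hs₁) hg₁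
        have hs2u : s₂ = u₁ := by
          by_contra hne
          exact P.I5 s₂ hs₂ u₁ hu₁ hne (v.g * s₂) (by rw [hgx]; exact P.I1a s₂ hs₂) hg₂
        rw [hs1u, hs2u]
      · by_cases hw : ∃ w ∈ P.S, v.g ∈ P.T w
        · obtain ⟨w, hwS, hgw⟩ := hw
          have hwu : w ≠ u₁ := fun h => hgnotu (h ▸ hgw)
          obtain ⟨e, heS, hexit, huniq⟩ := P.I3 w hwS v.g hgw
          have e1 : s₁ = e := by
            by_contra hne
            exact P.I5 w hwS u₁ hu₁ hwu (v.g * s₁) (huniq s₁ hs₁ hne) hg₁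
          have e2 : s₂ = e := by
            by_contra hne
            exact P.I5 w hwS u₁ hu₁ hwu (v.g * s₂) (huniq s₂ hs₂ hne) hg₂
          rw [e1, e2]
        · push_neg at hw
          have hgx' : v.g ≠ P.x := hgx
          have := P.I4 v.g hgx' hw s₁ hs₁ s₂ hs₂ u₁ hu₁ u₁ hu₁ hg₁ hg₂
          rw [this]
    · have hva : v.a = 0 := by
        funext t
        by_cases h1 : t ∈ P.T u₁
        · have h2 : t ∉ P.T u₂ := P.I5 u₁ hu₁ u₂ hu₂ huu t h1
          exact hsupp₂ t h2
        · exact hsupp₁ t h1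
      have hgx : v.g ≠ P.x := by
        intro h
        exact hvx ((Wr.ext_iff' v P.wx).mpr ⟨hva, h⟩)
      have hgT : ∀ w ∈ P.S, v.g ∉ P.T w := by
        intro w hwS hmem
        apply notSub w hwS
        refine P.mem_subwF.mpr ⟨hmem, ?_⟩
        intro t _
        rw [hva]
        rfl
      have := P.I4 v.g hgx hgT s₁ hs₁ s₂ hs₂ u₁ hu₁ u₂ hu₂ hg₁ hg₂
      rw [this]

lemma wμ_wgen : P.wμ (wgen G) = fun v => v * Wr.mk 0 P.s₀ := by
  simp [wμ, wgen_g]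

lemma wμ_mk0 {s : G} (hs : s ∈ P.S) :
    P.wμ (Wr.mk 0 s) = fun v => ⟨v.a + Wr.dg v.g, v.g⟩ := by
  have : s ≠ 1 := fun h => P.not_one (h ▸ hs)
  simp [wμ, mk0_g, this]

lemma lift_μinj : ∀ z ∈ P.Sl, Function.Injective (P.wμ z) := by
  intro z hz
  rcases P.mem_Sl.mp hz with rfl | ⟨s, hs, rfl⟩
  · rw [P.wμ_wgen]
    intro a b h
    exact mul_right_cancel h
  · rw [P.wμ_mk0 hs]
    intro a b h
    obtain ⟨h1, h2⟩ := Wr.mk_eq_mk.mp h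
    rw [h2] at h1
    apply (Wr.ext_iff' a b).mpr
    exact ⟨add_right_cancel h1, h2⟩

lemma lift_μmem : ∀ z ∈ P.Sl, ∀ v ∈ P.wT z, P.wμ z v ∈ P.wT z := by
  intro z hz v hv
  rcases P.mem_Sl.mp hz with rfl | ⟨s, hs, rfl⟩
  · rw [wT_wgen] at hv ⊢
    rw [P.wμ_wgen]
    show v * Wr.mk 0 P.s₀ ∈ P.copyF
    rw [Wr.mul_mk0, P.mem_copyF]
    have hva : v.a = Wr.dg P.x := P.mem_copyF.mp hv
    exact hva
  · rw [P.wT_mk0 hs] at hv ⊢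
    rw [P.wμ_mk0 hs]
    obtain ⟨hg, hsupp⟩ := P.mem_subwF.mp hv
    apply P.mem_subwF.mpr
    refine ⟨hg, ?_⟩
    intro t ht
    have hne : t ≠ v.g := fun h => ht (h ▸ hg)
    show v.a t + Wr.dg v.g t = 0
    rw [hsupp t ht, Wr.dg_ne hne, add_zero]

lemma lift_μφ : ∀ z ∈ P.Sl, ∀ v ∈ P.wT z, P.wφ (P.wμ z v) = P.wφ v + 1 := by
  intro z hz v _
  rcases P.mem_Sl.mp hz with rfl | ⟨s, hs, rfl⟩
  · rw [P.wμ_wgen]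
    exact P.lift_hφ v (Wr.mk 0 P.s₀) (P.mk0_mem_Sl P.hs₀)
  · rw [P.wμ_mk0 hs]
    show (∑ t : G, (v.a + Wr.dg v.g) t) + P.φ v.g = P.wφ v + 1
    rw [sum_add_dg]
    unfold wφ
    ring

/-- The lifted invariant package on the wreath product. -/
def lift : Gad (Wr G) where
  S := P.Sl
  sym := P.lift_sym
  not_one := P.lift_not_one
  gen := P.lift_gen
  card2 := P.lift_card2
  φ := P.wφ
  hφ := P.lift_hφ
  x := P.wx
  T := P.wT
  s₀ := Wr.mk 0 P.s₀
  hs₀ := P.mk0_mem_Sl P.hs₀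
  I1a := P.lift_I1a
  I1b := P.lift_I1b
  I3 := P.lift_I3
  I4 := P.lift_I4
  I5 := P.lift_I5
  μ := P.wμ
  hμinj := P.lift_μinj
  hμmem := P.lift_μmem
  hμφ := P.lift_μφ

lemma lift_S_card : (P.lift).S.card = P.S.card + 1 := P.card_Sl

lemma lift_S_coe : ((P.lift).S : Set (Wr G)) = wS (↑P.S : Set G) := by
  show ((insert (wgen G) (P.S.image (Wr.mk 0)) : Finset (Wr G)) : Set (Wr G)) = _
  rw [Finset.coe_insert, Finset.coe_image]
  rfl

end Gad
/-! ### Base case: the cycle `C₈` on `Z₈` -/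

abbrev M8 := Multiplicative (ZMod 8)

def o (k : ZMod 8) : M8 := Multiplicative.ofAdd k

def baseS : Finset M8 := {o 1, o 7}

def baseT : M8 → Finset M8 := fun s =>
  if s = o 1 then {o 1, o 2} else if s = o 7 then {o 6, o 7} else ∅

def baseφ : M8 → ZMod 2 := fun g => ((g.toAdd.val : ℕ) : ZMod 2)

def baseμ : M8 → M8 → M8 := fun s g =>
  if s = o 1 then o (3 - g.toAdd) else o (5 - g.toAdd)

def base : Gad M8 where
  S := baseS
  sym := by decide
  not_one := by decide
  gen := by
    rw [Subgroup.eq_top_iff']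
    intro g
    have h1 : o 1 ∈ Subgroup.closure (↑baseS : Set M8) :=
      Subgroup.subset_closure (by simp [baseS])
    have key : g = (o 1) ^ (g.toAdd).val := by
      revert g; decide
    rw [key]
    exact pow_mem h1 _
  card2 := ⟨3, by decide⟩
  φ := baseφ
  hφ := by decide
  x := o 0
  T := baseT
  s₀ := o 1
  hs₀ := by decide
  I1a := by decide
  I1b := by decide
  I3 := by decide
  I4 := by
    have key : ∀ v : M8, ∀ s₁ ∈ baseS, ∀ s₂ ∈ baseS, ∀ t₁ ∈ baseS, ∀ t₂ ∈ baseS,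
        v ≠ o 0 → (∀ s ∈ baseS, v ∉ baseT s) →
        v * s₁ ∈ baseT t₁ → v * s₂ ∈ baseT t₂ → s₁ = s₂ := by decide
    intro v hv1 hv2 s₁ hs₁ s₂ hs₂ t₁ ht₁ t₂ ht₂ h1 h2
    exact key v s₁ hs₁ s₂ hs₂ t₁ ht₁ t₂ ht₂ hv1 hv2 h1 h2
  I5 := by decide
  μ := baseμ
  hμinj := by decide
  hμmem := by decide
  hμφ := by decide

/-! ### Final assembly -/

structure Pack (d : ℕ) where
  G : Type
  [grp : Group G]
  [fin : Fintype G]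
  [deq : DecidableEq G]
  gad : @Gad G grp fin deq
  hcard : gad.S.card = d

def basePack : Pack 2 := ⟨M8, base, by decide⟩

def stepPack {d : ℕ} (p : Pack d) : Pack (d + 1) := by
  letI := p.grp; letI := p.fin; letI := p.deq
  exact ⟨Wr p.G, p.gad.lift, by rw [Gad.lift_S_card, p.hcard]⟩

def packs : (n : ℕ) → Pack (n + 2)
  | 0 => basePack
  | (n + 1) => stepPack (packs n)


/-- For every `d ≥ 2` there is a finite group `G` of 2-power order with an
inverse-closed identity-free generating set `S` of size `d` such that `Cay(G, S)` is
bipartite and admits an induced subgraph of maximum degree at most 1 on strictly more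
than half its vertices. -/
theorem iterated_wreath_counterexamples (d : ℕ) (hd : 2 ≤ d) :
    ∃ (G : Type) (instG : Group G) (_ : Finite G) (S : Set G),
      (∃ k : ℕ, Nat.card G = 2 ^ k) ∧ @GoodBipartiteCayley G instG S d := by
  obtain ⟨n, rfl⟩ : ∃ n, n + 2 = d := ⟨d - 2, by omega⟩
  let p := packs n
  letI := p.grp; letI := p.fin; letI := p.deq
  refine ⟨p.G, p.grp, Finite.of_fintype _, ↑p.gad.S, ?_, ?_⟩
  · obtain ⟨k, hk⟩ := p.gad.card2
    exact ⟨k, by rw [Nat.card_eq_fintype_card, hk]⟩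
  · have h := p.gad.toGood
    rwa [p.hcard] at h
end

section
/- There is no function f : ℕ → ℝ with f(d) > 1 for all d ≥ 3 such that every Cayley graph of valency d has the property that every induced subgraph on more than half its vertices has maximum degree at least f(d); in particular, for each d of the form produced by the iterated wreath construction, there is a d-valent Cayley graph with an induced subgraph of maximum degree 1 on more than half its vertices. -/
/-- The counterexample generating set: three reflections in the dihedral group of order 18. -/
def finS : Finset (DihedralGroup 9) :=
  {DihedralGroup.sr 0, DihedralGroup.sr 1, DihedralGroup.sr 3}

/-- The large induced subgraph of maximum degree 1. -/
def finU : Finset (DihedralGroup 9) :=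
  {DihedralGroup.r 0, DihedralGroup.r 2, DihedralGroup.r 5, DihedralGroup.r 6,
   DihedralGroup.r 8, DihedralGroup.sr 0, DihedralGroup.sr 2, DihedralGroup.sr 5,
   DihedralGroup.sr 6, DihedralGroup.sr 8}

instance decAdj : DecidableRel (cayley (DihedralGroup 9) (↑finS : Set (DihedralGroup 9))).Adj :=
  fun a b => decidable_of_iff (a ≠ b ∧ (a⁻¹ * b ∈ finS ∨ b⁻¹ * a ∈ finS)) (by
    rw [cayley, SimpleGraph.fromRel_adj]
    simp)

lemma key_deg : ∀ g ∈ finU,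
    (finU.filter (fun h => (cayley (DihedralGroup 9) (↑finS : Set (DihedralGroup 9))).Adj g h)).card ≤ 1 := by
  decide

lemma key_closure :
    Subgroup.closure (↑finS : Set (DihedralGroup 9)) = ⊤ := by
  rw [eq_top_iff]
  rintro x -
  set C := Subgroup.closure (↑finS : Set (DihedralGroup 9)) with hC
  have h0 : (DihedralGroup.sr 0 : DihedralGroup 9) ∈ C :=
    Subgroup.subset_closure (by simp [finS])
  have h1 : (DihedralGroup.sr 1 : DihedralGroup 9) ∈ C :=
    Subgroup.subset_closure (by simp [finS])
  have hr1 : (DihedralGroup.r 1 : DihedralGroup 9) ∈ C := by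
    have e : (DihedralGroup.sr 0 : DihedralGroup 9) * DihedralGroup.sr 1 = DihedralGroup.r 1 := by
      decide
    exact e ▸ mul_mem h0 h1
  have hr : ∀ i : ZMod 9, (DihedralGroup.r i : DihedralGroup 9) ∈ C := by
    intro i
    have e : (DihedralGroup.r 1 : DihedralGroup 9) ^ (i.val) = DihedralGroup.r i := by
      rw [DihedralGroup.r_one_pow]
      congr 1
      simp [ZMod.natCast_val, ZMod.cast_id]
    exact e ▸ pow_mem hr1 i.val
  cases x with
  | r i => exact hr i
  | sr i =>
    have e : (DihedralGroup.sr 0 : DihedralGroup 9) * DihedralGroup.r i = DihedralGroup.sr i := by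
      show DihedralGroup.sr (0 + i) = DihedralGroup.sr i
      rw [zero_add]
    exact e ▸ mul_mem h0 (hr i)

/-- There is no function `f : ℕ → ℝ` with `f d > 1` for all `d ≥ 3` such that every
Cayley graph of valency `d` (i.e. with inverse-closed identity-free generating set of
size `d`) has the property that every induced subgraph on more than half of its vertices
has maximum degree at least `f d`: the Cayley graphs on iterated wreath products provide,
for infinitely many valencies `d`, `d`-valent counterexamples with an induced subgraph of
maximum degree at most 1 on more than half the vertices. -/
theorem no_lower_bound_function :
    ¬ ∃ f : ℕ → ℝ, (∀ d : ℕ, 3 ≤ d → f d > 1) ∧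
      ∀ (G : Type) (instG : Group G) (_ : Finite G) (S : Set G),
        (∀ s ∈ S, @Inv.inv G instG.toDivInvMonoid.toInv s ∈ S) →
        (1 : G) ∉ S →
        @Subgroup.closure G instG S = ⊤ →
        3 ≤ S.ncard →
        ∀ U : Set G, 2 * U.ncard > Nat.card G →
          ∃ g ∈ U, (f S.ncard : ℝ) ≤ ({h ∈ U | (@cayley G instG S).Adj g h}).ncard := by
  rintro ⟨f, hf, H⟩
  have hSn : (↑finS : Set (DihedralGroup 9)).ncard = 3 := by
    rw [Set.ncard_coe_finset]; decide
  have hinv : ∀ s ∈ (↑finS : Set (DihedralGroup 9)), s⁻¹ ∈ (↑finS : Set (DihedralGroup 9)) := by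
    intro s hs
    rw [Finset.mem_coe] at hs ⊢
    revert s
    decide
  have hone : (1 : DihedralGroup 9) ∉ (↑finS : Set (DihedralGroup 9)) := by
    rw [Finset.mem_coe]; decide
  have hcard : Nat.card (DihedralGroup 9) = 18 := by
    rw [Nat.card_eq_fintype_card]; decide
  have hU : 2 * (↑finU : Set (DihedralGroup 9)).ncard > Nat.card (DihedralGroup 9) := by
    rw [Set.ncard_coe_finset, hcard]
    decide
  obtain ⟨g, hg, hle⟩ := H (DihedralGroup 9) inferInstance inferInstance
    (↑finS : Set (DihedralGroup 9)) hinv hone key_closure (by rw [hSn]) (↑finU) hU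
  have hsep : {h ∈ (↑finU : Set (DihedralGroup 9)) |
      (cayley (DihedralGroup 9) (↑finS : Set (DihedralGroup 9))).Adj g h} =
      ↑(finU.filter (fun h => (cayley (DihedralGroup 9) (↑finS : Set (DihedralGroup 9))).Adj g h)) := by
    ext h
    simp [Set.mem_sep_iff]
  rw [hsep, Set.ncard_coe_finset] at hle
  have h3 : finS.card = 3 := by decide
  rw [Set.ncard_coe_finset, h3] at hle
  have hdeg := key_deg g (Finset.mem_coe.mp hg)
  have h1 : f 3 > 1 := hf 3 le_rfl
  have : ((finU.filter (fun h => (cayley (DihedralGroup 9) (↑finS : Set (DihedralGroup 9))).Adj g h)).card : ℝ) ≤ 1 := by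
    exact_mod_cast hdeg
  linarith
end
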